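/- arXiv:1403.7938 — 8 statements merged into one kernel-verified Lean document; each statement's English description precedes it below -/
import Mathlib

section
/- Let F be a type of algebras, V a variety of algebras of type F, k ∈ ℕ, and A a k-generated algebra of type F. Then A ∈ V if and only if A satisfies every identity in at most k variables that holds in V. -/
open FirstOrder FirstOrder.Language

universe u v

/-- A bundled algebra for the language `L`: a type together with an
interpretation of the operation symbols of `L`. -/
structure Alg (L : FirstOrder.Language.{u, v}) : Type (max u v 1) where
  carrier : Type
  [str : L.Structure carrier]

attribute [instance] Alg.str

/-- An identity (equational law): a pair of terms in `n` variables. -/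
abbrev Identity (L : FirstOrder.Language) :=
  Σ n : ℕ, L.Term (Fin n) × L.Term (Fin n)

/-- `A` satisfies the identity `e`: the two induced term functions agree. -/
def Alg.Sat {L : FirstOrder.Language} (A : Alg L) (e : Identity L) : Prop :=
  ∀ v : Fin e.1 → A.carrier, e.2.1.realize v = e.2.2.realize v

/-- The class of all models of a set of identities. -/
def ModClass (L : FirstOrder.Language) (E : Set (Identity L)) : Set (Alg L) :=
  {A | ∀ e ∈ E, A.Sat e}

/-- A variety (equational class): a class of algebras defined by a set of identities. -/
def IsVariety (L : FirstOrder.Language) (V : Set (Alg L)) : Prop :=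
  ∃ E : Set (Identity L), V = ModClass L E

/-- `varGen L K` is the smallest variety containing the class `K`:
the models of all identities valid in `K`. -/
def varGen (L : FirstOrder.Language) (K : Set (Alg L)) : Set (Alg L) :=
  ModClass L {e | ∀ B ∈ K, B.Sat e}

/-- `f` is a `k`-edge operation (`k ≥ 2`): a `(k+1)`-ary operation with
`f(y,y,x,…,x) = f(y,x,y,x,…,x) = x` and `f(x,…,x,y,x,…,x) = x` whenever the
single `y` is in a position `≥ 4` (1-indexed). -/
def IsEdgeOp {A : Type} (k : ℕ) (f : (Fin (k + 1) → A) → A) : Prop :=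
  (∀ x y : A, f (fun i => if (i : ℕ) ≤ 1 then y else x) = x) ∧
  (∀ x y : A, f (fun i => if (i : ℕ) = 0 ∨ (i : ℕ) = 2 then y else x) = x) ∧
  (∀ i : Fin (k + 1), 3 ≤ (i : ℕ) → ∀ x y : A,
    f (Function.update (fun _ => x) i y) = x)

/-- An algebra has an edge term if some term induces a `k`-edge operation for some `k ≥ 2`. -/
def HasEdgeTerm (L : FirstOrder.Language) (A : Type) [L.Structure A] : Prop :=
  ∃ k : ℕ, 2 ≤ k ∧ ∃ t : L.Term (Fin (k + 1)), IsEdgeOp k (fun v : Fin (k + 1) → A => t.realize v)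

/-- An algebra is `k`-generated if it is generated by a subset of size at most `k`. -/
def KGen (L : FirstOrder.Language) (k : ℕ) (A : Alg L) : Prop :=
  ∃ S : Set A.carrier, S.Finite ∧ S.ncard ≤ k ∧ Substructure.closure L S = ⊤

/-- An algebra is finitely generated if it is generated by a finite subset. -/
def FinGen (L : FirstOrder.Language) (A : Alg L) : Prop :=
  ∃ S : Set A.carrier, S.Finite ∧ Substructure.closure L S = ⊤

/-- A class of algebras is locally finite if all of its finitely generated members
are finite. -/
def IsLocallyFinite (L : FirstOrder.Language) (V : Set (Alg L)) : Prop :=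
  ∀ A ∈ V, FinGen L A → Finite A.carrier

/-- A finite algebra `B` is cardinality critical if it does not lie in the variety
generated by the algebras in `Var(B)` of size smaller than `B`. -/
def CardCritical (L : FirstOrder.Language) (B : Alg L) : Prop :=
  Finite B.carrier ∧
    B ∉ varGen L {C | C ∈ varGen L {B} ∧ Cardinal.mk C.carrier < Cardinal.mk B.carrier}

/-- `V` is a subcover of `W`: `V ⊂ W` and no variety lies strictly between them. -/
def IsSubcover (L : FirstOrder.Language) (V W : Set (Alg L)) : Prop :=
  V ⊂ W ∧ ¬ ∃ V' : Set (Alg L), IsVariety L V' ∧ V ⊂ V' ∧ V' ⊂ W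

/-- **Lemma (identities and k-generated algebras, part 2).** Let `V` be a variety of
type `L`, let `k : ℕ`, and let `A` be a `k`-generated algebra of type `L`.
Then `A ∈ V` if and only if `A` satisfies every identity with at most `k`
variables that holds in `V`. -/
theorem mem_variety_iff_sat_k_variable_identities
    (L : FirstOrder.Language) [L.IsAlgebraic]
    (V : Set (Alg L)) (hV : IsVariety L V)
    (k : ℕ) (A : Alg L) (hA : KGen L k A) :
    A ∈ V ↔
      ∀ n ≤ k, ∀ s t : L.Term (Fin n),
        (∀ B ∈ V, B.Sat ⟨n, (s, t)⟩) → A.Sat ⟨n, (s, t)⟩ := by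
  obtain ⟨E, rfl⟩ := hV
  constructor
  · intro hAV n hn s t hst
    exact hst A hAV
  · intro h ⟨m, s, t⟩ he v
    by_cases hne : Nonempty A.carrier
    · -- main case
      obtain ⟨S, hSfin, hScard, hScl⟩ := hA
      obtain ⟨n, f, hrange⟩ := hSfin.fin_embedding
      have hnk : n ≤ k := by
        have : S.ncard = n := by
          rw [← hrange, ← Nat.card_coe_set_eq, Nat.card_range_of_injective f.injective,
            Nat.card_eq_fintype_card, Fintype.card_fin]
        omega
      classical
      -- g : Fin k → A.carrier with S ⊆ range g
      set g : Fin k → A.carrier := fun j => if hj : (j : ℕ) < n then f ⟨j, hj⟩ else Classical.arbitrary _ with hg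
      have hSg : ∀ x ∈ S, ∃ j : Fin k, g j = x := by
        intro x hx
        rw [← hrange] at hx
        obtain ⟨i, rfl⟩ := hx
        refine ⟨⟨i, lt_of_lt_of_le i.2 hnk⟩, ?_⟩
        simp [hg, i.2]
      -- each v i is the realization of a term in Fin k variables under g
      have hterm : ∀ i : Fin m, ∃ w : L.Term (Fin k), w.realize g = v i := by
        intro i
        have : v i ∈ Substructure.closure L S := by rw [hScl]; trivial
        obtain ⟨u, hu⟩ := (Substructure.mem_closure_iff_exists_term).mp this
        refine ⟨u.relabel (fun x => Classical.choose (hSg x.1 x.2)), ?_⟩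
        rw [Term.realize_relabel, ← hu]
        congr 1
        funext x
        exact Classical.choose_spec (hSg x.1 x.2)
      choose w hw using hterm
      have key : ∀ B ∈ ModClass L E, B.Sat ⟨k, (s.subst w, t.subst w)⟩ := by
        intro B hB u
        simp only [Term.realize_subst]
        exact hB ⟨m, (s, t)⟩ he _
      have := h k le_rfl (s.subst w) (t.subst w) key g
      simp only [Term.realize_subst] at this
      have hvw : (fun i => (w i).realize g) = v := funext hw
      rwa [hvw] at this
    · -- empty carrier
      rcases Nat.eq_zero_or_pos m with rfl | hm
      · exact h 0 (Nat.zero_le k) s t (fun B hB => hB ⟨0, (s, t)⟩ he) v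
      · exact absurd ⟨v ⟨0, hm⟩⟩ hne
end

section
/- Let V be a locally finite variety of arbitrary type F, and let W be a subvariety of V. Then the following are equivalent: (1) there exists no infinite strictly ascending chain of varieties V_1 ⊂ V_2 ⊂ V_3 ⊂ ⋯ with W = Var(⋃_{i∈ℕ} V_i); (2) W is finitely generated. -/
open FirstOrder FirstOrder.Language

universe u v

section Aux

variable {L : FirstOrder.Language.{u, v}}

lemma subset_varGen (K : Set (Alg L)) : K ⊆ varGen L K :=
  fun _A hA _e he => he _ hA

lemma modClass_anti {E E' : Set (Identity L)} (h : E ⊆ E') :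
    ModClass L E' ⊆ ModClass L E := fun _A hA e he => hA e (h he)

lemma varGen_mono {K K' : Set (Alg L)} (h : K ⊆ K') : varGen L K ⊆ varGen L K' :=
  modClass_anti (fun _e he B hB => he B (h hB))

lemma varGen_modClass (E : Set (Identity L)) :
    varGen L (ModClass L E) = ModClass L E :=
  subset_antisymm (modClass_anti (fun _e he A hA => hA _ he)) (subset_varGen _)

lemma varGen_singleton_subset {B : Alg L} {E : Set (Identity L)}
    (h : ∀ e ∈ E, B.Sat e) : varGen L {B} ⊆ ModClass L E :=
  fun _A hA e he => hA e (fun B' hB' => by rw [Set.mem_singleton_iff] at hB'; subst hB'; exact h e he)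

lemma Alg.sat_relabel {A : Alg L} {k n : ℕ} {p q : L.Term (Fin k)} (σ : Fin k → Fin n)
    (h : A.Sat ⟨k, (p, q)⟩) : A.Sat ⟨n, (p.relabel σ, q.relabel σ)⟩ := by
  intro u
  simp only [Term.realize_relabel]
  exact h _

/-- The product algebra. -/
def piAlg {ι : Type} (A : ι → Alg L) : Alg L where
  carrier := ∀ i, (A i).carrier
  str :=
    { funMap := fun f x i => Structure.funMap f (fun k => x k i)
      RelMap := fun r x => ∀ i, Structure.RelMap r (fun k => x k i) }

lemma realize_pi {ι : Type} (A : ι → Alg L) {n : ℕ} (t : L.Term (Fin n))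
    (w : Fin n → (piAlg A).carrier) (i : ι) :
    (t.realize w) i = t.realize (fun k => w k i) := by
  induction t with
  | var => rfl
  | func f ts ih =>
      show Structure.funMap f (fun j => (ts j).realize w i) = _
      exact congrArg _ (funext fun j => ih j)

lemma piAlg_mem_modClass {ι : Type} {A : ι → Alg L} {E : Set (Identity L)}
    (h : ∀ i, A i ∈ ModClass L E) : piAlg A ∈ ModClass L E :=
  fun e he v => funext fun i => by
    rw [realize_pi, realize_pi]; exact h i e he _

/-- The trivial one-element algebra. -/
def punitAlg (L : FirstOrder.Language.{u, v}) : Alg L where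
  carrier := PUnit
  str := { funMap := fun _ _ => PUnit.unit, RelMap := fun _ _ => True }

lemma punitAlg_mem_modClass {E : Set (Identity L)} : punitAlg L ∈ ModClass L E :=
  fun _e _he _v => @Subsingleton.elim PUnit _ _ _

/-- Subalgebra on a substructure. -/
def subAlg (A : Alg L) (S : L.Substructure A.carrier) : Alg L where
  carrier := S

lemma subAlg_realize_val {A : Alg L} {S : L.Substructure A.carrier} {n : ℕ}
    (t : L.Term (Fin n)) (v : Fin n → S) :
    (t.realize v : S).val = t.realize (fun k => (v k).val) := by
  have h := HomClass.realize_term (L := L) (M := S) (N := A.carrier)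
    S.subtype (t := t) (v := v)
  exact h.symm

lemma subAlg_mem_modClass {A : Alg L} {S : L.Substructure A.carrier} {E : Set (Identity L)}
    (hA : A ∈ ModClass L E) : subAlg A S ∈ ModClass L E := by
  intro e he v
  show (e.2.1.realize v : S) = e.2.2.realize v
  apply Subtype.val_injective
  exact (subAlg_realize_val (S := S) e.2.1 v).trans ((hA e he _).trans (subAlg_realize_val (S := S) e.2.2 v).symm)

lemma exists_term_of_mem_closure {M : Type} [L.Structure M] {n : ℕ} {g : Fin n → M} {x : M}
    (hx : x ∈ Substructure.closure L (Set.range g)) :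
    ∃ t : L.Term (Fin n), t.realize g = x := by
  obtain ⟨t, ht⟩ := Substructure.mem_closure_iff_exists_term.mp hx
  choose σ hσ using fun (y : ↥(Set.range g)) => y.2
  refine ⟨t.relabel σ, ?_⟩
  rw [Term.realize_relabel, ← ht]
  rw [show (g ∘ σ : (Set.range g) → M) = Subtype.val from funext fun y => hσ y]

lemma closure_preimage_top {M : Type} [L.Structure M] (s : Set M) :
    Substructure.closure L
      (Subtype.val ⁻¹' s : Set ((Substructure.closure L s) : L.Substructure M)) = ⊤ := by
  have S := Substructure.closure L s
  apply Substructure.map_injective_of_injective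
    (f := (Substructure.closure L s).subtype.toHom) (Substructure.closure L s).subtype.injective
  rw [Substructure.map_closure]
  have h1 : (Substructure.closure L s).subtype.toHom '' (Subtype.val ⁻¹' s) = s := by
    apply subset_antisymm
    · rintro _ ⟨y, hy, rfl⟩; exact hy
    · intro y hy
      exact ⟨⟨y, Substructure.subset_closure hy⟩, hy, rfl⟩
  rw [h1, ← Hom.range_eq_map, Substructure.range_subtype]

end Aux

section Quot

variable {L : FirstOrder.Language.{u, v}}

/-- Identity of terms over a class of algebras. -/
def termRelSetoid (L : FirstOrder.Language.{u, v}) (Wc : Set (Alg L)) (n : ℕ) :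
    Setoid (L.Term (Fin n)) where
  r p q := ∀ A ∈ Wc, ∀ v : Fin n → A.carrier, p.realize v = q.realize v
  iseqv := ⟨fun _p _A _hA _v => rfl, fun h A hA v => (h A hA v).symm,
    fun h h' A hA v => (h A hA v).trans (h' A hA v)⟩

lemma tq_finite {E : Set (Identity L)} {Wc : Set (Alg L)} (hWc : Wc = ModClass L E)
    (hLF : ∀ A ∈ Wc, FinGen L A → Finite A.carrier) (n : ℕ) :
    Finite (Quotient (termRelSetoid L Wc n)) := by
  by_contra hinf
  rw [not_finite_iff_infinite] at hinf
  obtain ⟨f, hfinj⟩ := Infinite.natEmbedding (Quotient (termRelSetoid L Wc n))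
  set p : ℕ → L.Term (Fin n) := fun i => (f i).out with hp
  have hne : ∀ i j : ℕ, i ≠ j → ¬ (termRelSetoid L Wc n).r (p i) (p j) := by
    intro i j hij hr
    apply hij
    apply hfinj
    have h1 : f i = ⟦p i⟧ := (Quotient.out_eq (f i)).symm
    have h2 : f j = ⟦p j⟧ := (Quotient.out_eq (f j)).symm
    rw [h1, h2]
    exact Quotient.sound hr
  have hsep : ∀ c : ℕ × ℕ, ∃ A : Alg L, A ∈ ModClass L E ∧ ∃ v : Fin n → A.carrier,
      c.1 ≠ c.2 → (p c.1).realize v ≠ (p c.2).realize v := by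
    intro c
    by_cases hc : c.1 = c.2
    · exact ⟨punitAlg L, punitAlg_mem_modClass, fun _ => PUnit.unit, fun h => absurd hc h⟩
    · have := hne c.1 c.2 hc
      change ¬ ∀ A ∈ Wc, ∀ v : Fin n → A.carrier, (p c.1).realize v = (p c.2).realize v at this
      simp only [not_forall] at this
      obtain ⟨A, hA, v, hv⟩ := this
      exact ⟨A, hWc ▸ hA, v, fun _ => hv⟩
  choose A hA v hv using hsep
  have hP : piAlg A ∈ ModClass L E := piAlg_mem_modClass hA
  set g : Fin n → (piAlg A).carrier := fun k c => v c k with hg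
  set x : ℕ → (piAlg A).carrier := fun i => (p i).realize g with hx
  have hxinj : Function.Injective x := by
    intro i j hij
    by_contra hne'
    have h2 := congrFun hij (i, j)
    rw [hx] at h2
    simp only at h2
    rw [realize_pi, realize_pi] at h2
    exact hv (i, j) hne' h2
  have hxS : ∀ i, x i ∈ Substructure.closure L (Set.range g) := fun i =>
    Term.realize_mem _ _ (fun k => Substructure.subset_closure (Set.mem_range_self k))
  have hinfS : Infinite (Substructure.closure L (Set.range g) : L.Substructure (piAlg A).carrier) :=
    Infinite.of_injective (fun i => (⟨x i, hxS i⟩ : Substructure.closure L (Set.range g)))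
      (fun i j h => hxinj (congrArg Subtype.val h))
  have hsub : subAlg (piAlg A) (Substructure.closure L (Set.range g)) ∈ Wc :=
    hWc ▸ subAlg_mem_modClass hP
  have hfg : FinGen L (subAlg (piAlg A) (Substructure.closure L (Set.range g))) := by
    refine ⟨Subtype.val ⁻¹' (Set.range g),
      Set.Finite.preimage Subtype.val_injective.injOn (Set.finite_range g), ?_⟩
    exact closure_preimage_top (Set.range g)
  exact absurd (hLF _ hsub hfg) (@not_finite _ hinfS)

end Quot

section Main

variable {L : FirstOrder.Language.{u, v}}

lemma subAlg_KGen {A : Alg L} {k : ℕ} (v : Fin k → A.carrier) :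
    ∃ S : Set (subAlg A (Substructure.closure L (Set.range v))).carrier,
      S.Finite ∧ S.ncard ≤ k ∧ Substructure.closure L S = ⊤ := by
  refine ⟨Subtype.val ⁻¹' (Set.range v),
    Set.Finite.preimage Subtype.val_injective.injOn (Set.finite_range v), ?_,
    closure_preimage_top _⟩
  calc (Subtype.val ⁻¹' (Set.range v)).ncard
      = (Subtype.val '' (Subtype.val ⁻¹' (Set.range v))).ncard :=
        (Set.ncard_image_of_injective _ Subtype.val_injective).symm
    _ ≤ (Set.range v).ncard :=
        Set.ncard_le_ncard (Set.image_preimage_subset _ _) (Set.finite_range v)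
    _ ≤ k := by rw [← Nat.card_coe_set_eq]; simpa using Finite.card_range_le v

lemma exists_superrange {α : Type} [Nonempty α] {S : Set α} {N : ℕ}
    (hfin : S.Finite) (hcard : S.ncard ≤ N) :
    ∃ g : Fin N → α, S ⊆ Set.range g := by
  haveI := hfin.to_subtype
  obtain ⟨m, ⟨η⟩⟩ := Finite.exists_equiv_fin S
  have hm : m ≤ N := by
    have h1 : Nat.card S = m := Nat.card_eq_of_equiv_fin η
    rw [Nat.card_coe_set_eq] at h1
    omega
  refine ⟨fun j => if h : (j : ℕ) < m then (η.symm ⟨j, h⟩ : α) else Classical.arbitrary α, ?_⟩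
  intro y hy
  refine ⟨⟨(η ⟨y, hy⟩ : ℕ), lt_of_lt_of_le (η ⟨y, hy⟩).2 hm⟩, ?_⟩
  simp [Fin.eta, (η ⟨y, hy⟩).2]

end Main

/-- **Lemma (finitely generated subvarieties via ACC).** Let `V` be a locally finite
variety and `W` a subvariety of `V`. Then the following are equivalent:
1. there is no infinite strictly ascending chain `V₁ ⊂ V₂ ⊂ ⋯` of varieties
   with `W = Var(⋃ᵢ Vᵢ)`;
2. `W` is finitely generated. -/
theorem no_ascending_chain_iff_finitely_generated
    (L : FirstOrder.Language) [L.IsAlgebraic]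
    (V : Set (Alg L)) (hV : IsVariety L V) (hLF : IsLocallyFinite L V)
    (W : Set (Alg L)) (hW : IsVariety L W) (hWV : W ⊆ V) :
    (¬ ∃ C : ℕ → Set (Alg L),
        (∀ i, IsVariety L (C i)) ∧ (∀ i, C i ⊂ C (i + 1)) ∧
        W = varGen L (⋃ i, C i)) ↔
      (∃ B : Alg L, Finite B.carrier ∧ W = varGen L {B}) := by
  obtain ⟨E, hE⟩ := hW
  have hLFW : ∀ A ∈ W, FinGen L A → Finite A.carrier := fun A hA => hLF A (hWV hA)
  constructor
  · -- (1) → (2)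
    intro h1
    by_contra h2
    push_neg at h2
    set K : ℕ → Set (Alg L) := fun k => {A | A ∈ W ∧ KGen L k A} with hK
    set C : ℕ → Set (Alg L) := fun k => varGen L (K k) with hC
    have hKW : ∀ k, K k ⊆ W := fun k A hA => hA.1
    have hKmono : ∀ {i j : ℕ}, i ≤ j → K i ⊆ K j := by
      intro i j hij A hA
      obtain ⟨hAW, S, h1', h2', h3'⟩ := hA
      exact ⟨hAW, S, h1', h2'.trans hij, h3'⟩
    have hCmono : ∀ {i j : ℕ}, i ≤ j → C i ⊆ C j := fun hij => varGen_mono (hKmono hij)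
    have hvarW : varGen L W = W := by rw [hE]; exact varGen_modClass E
    have hCW : ∀ k, C k ⊆ W := fun k => (varGen_mono (hKW k)).trans (le_of_eq hvarW)
    have hWunion : W = varGen L (⋃ k, C k) := by
      apply subset_antisymm
      · intro A hAW e he
        intro v
        have hsubW : subAlg A (Substructure.closure L (Set.range v)) ∈ W := by
          rw [hE] at hAW ⊢; exact subAlg_mem_modClass hAW
        have hsubK : subAlg A (Substructure.closure L (Set.range v)) ∈ K e.1 :=
          ⟨hsubW, subAlg_KGen v⟩
        have hsubC : subAlg A (Substructure.closure L (Set.range v)) ∈ C e.1 :=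
          subset_varGen _ hsubK
        have hsat := he (subAlg A (Substructure.closure L (Set.range v)))
          (Set.mem_iUnion.mpr ⟨e.1, hsubC⟩)
        have hv' : ∀ k, v k ∈ Substructure.closure L (Set.range v) := fun k =>
          Substructure.subset_closure (Set.mem_range_self k)
        have h3 := congrArg Subtype.val (hsat (fun k => ⟨v k, hv' k⟩))
        exact (subAlg_realize_val (S := Substructure.closure L (Set.range v)) e.2.1
          (fun k => ⟨v k, hv' k⟩)).symm.trans (h3.trans (subAlg_realize_val
          (S := Substructure.closure L (Set.range v)) e.2.2 (fun k => ⟨v k, hv' k⟩)))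
      · rw [← hvarW]
        exact varGen_mono (Set.iUnion_subset hCW)
    have hCneW : ∀ N, C N ≠ W := by
      intro N hEqW
      haveI hQfin : Finite (Quotient (termRelSetoid L W N)) := tq_finite hE hLFW N
      set Fail : Set (Quotient (termRelSetoid L W N) × Quotient (termRelSetoid L W N)) :=
        {c | ∃ p q : L.Term (Fin N), Quotient.mk (termRelSetoid L W N) p = c.1 ∧
          Quotient.mk (termRelSetoid L W N) q = c.2 ∧
          ∃ A ∈ K N, ¬ A.Sat ⟨N, (p, q)⟩} with hFail
      obtain ⟨r, ⟨δ⟩⟩ := Finite.exists_equiv_fin Fail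
      have hw : ∀ i : Fin r, ∃ p q : L.Term (Fin N),
          Quotient.mk (termRelSetoid L W N) p = (δ.symm i).1.1 ∧
          Quotient.mk (termRelSetoid L W N) q = (δ.symm i).1.2 ∧
          ∃ A ∈ K N, ¬ A.Sat ⟨N, (p, q)⟩ := fun i => (δ.symm i).2
      choose pw qw hpw hqw Aw hAwK hAwn using hw
      have hu : ∀ i, ∃ u : Fin N → (Aw i).carrier, (pw i).realize u ≠ (qw i).realize u := by
        intro i
        have h3 := hAwn i
        simp only [Alg.Sat, not_forall] at h3
        exact h3
      choose uw huw using hu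
      have hAfin : ∀ i, Finite (Aw i).carrier := by
        intro i
        obtain ⟨hAW, S, hf, _, htop⟩ := hAwK i
        exact hLFW _ hAW ⟨S, hf, htop⟩
      have hBfin : Finite (piAlg Aw).carrier := by
        haveI : ∀ i, Finite (Aw i).carrier := hAfin
        exact Pi.finite
      apply h2 (piAlg Aw) hBfin
      have hBC : piAlg Aw ∈ C N := piAlg_mem_modClass (fun i => subset_varGen _ (hAwK i))
      apply subset_antisymm
      · -- W ⊆ varGen {B}
        intro A' hA'W e hBe
        have hBsat : (piAlg Aw).Sat e := hBe (piAlg Aw) rfl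
        have hkey : ∀ A'' ∈ K N, A''.Sat e := by
          intro A'' hA''
          intro vv
          by_contra hnev
          rcases isEmpty_or_nonempty A''.carrier with hAe | hAne
          · exact hAe.elim (e.2.1.realize vv)
          obtain ⟨hA''W, S, hSfin, hScard, hStop⟩ := hA''
          obtain ⟨g, hg⟩ := exists_superrange hSfin hScard
          have hgtop : Substructure.closure L (Set.range g) = ⊤ :=
            eq_top_iff.mpr (hStop ▸ Substructure.closure_mono hg)
          have ht : ∀ j, ∃ t : L.Term (Fin N), t.realize g = vv j := fun j =>
            exists_term_of_mem_closure (by rw [hgtop]; exact Substructure.mem_top _)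
          choose t ht' using ht
          have hsubne : ¬ A''.Sat ⟨N, (e.2.1.subst t, e.2.2.subst t)⟩ := by
            intro hs
            apply hnev
            have h3 := hs g
            simp only at h3
            rw [Term.realize_subst, Term.realize_subst] at h3
            have h4 : (fun j => (t j).realize g) = vv := funext ht'
            rwa [h4] at h3
          have hmem : (Quotient.mk (termRelSetoid L W N) (e.2.1.subst t),
              Quotient.mk (termRelSetoid L W N) (e.2.2.subst t)) ∈ Fail :=
            ⟨_, _, rfl, rfl, A'', ⟨hA''W, S, hSfin, hScard, hStop⟩, hsubne⟩
          have hδ : δ.symm (δ ⟨_, hmem⟩) = ⟨_, hmem⟩ := Equiv.symm_apply_apply δ _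
          have hpi : (termRelSetoid L W N).r (pw (δ ⟨_, hmem⟩)) (e.2.1.subst t) := by
            have h5 := hpw (δ ⟨_, hmem⟩)
            rw [hδ] at h5
            exact Quotient.exact h5
          have hqi : (termRelSetoid L W N).r (qw (δ ⟨_, hmem⟩)) (e.2.2.subst t) := by
            have h5 := hqw (δ ⟨_, hmem⟩)
            rw [hδ] at h5
            exact Quotient.exact h5
          obtain ⟨w, hw⟩ : ∃ w : Fin N → (piAlg Aw).carrier, w = fun j' i' => uw i' j' := ⟨_, rfl⟩
          have h5 : (e.2.1.subst t).realize w = (e.2.2.subst t).realize w := by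
            rw [Term.realize_subst, Term.realize_subst]; exact hBsat _
          have h6 := congrFun h5 (δ ⟨_, hmem⟩)
          rw [realize_pi, realize_pi] at h6
          subst hw
          have h7 : (e.2.1.subst t).realize (uw (δ ⟨_, hmem⟩)) =
              (e.2.2.subst t).realize (uw (δ ⟨_, hmem⟩)) := h6
          have h8 := hpi (Aw (δ ⟨_, hmem⟩)) (hAwK (δ ⟨_, hmem⟩)).1 (uw (δ ⟨_, hmem⟩))
          have h9 := hqi (Aw (δ ⟨_, hmem⟩)) (hAwK (δ ⟨_, hmem⟩)).1 (uw (δ ⟨_, hmem⟩))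
          exact huw (δ ⟨_, hmem⟩) (h8.trans (h7.trans h9.symm))
        rw [← hEqW] at hA'W
        exact hA'W e hkey
      · -- varGen {B} ⊆ W
        rw [← hEqW]
        exact varGen_singleton_subset (fun e he => hBC e he)
    have hCnotconst : ∀ j, ∃ m, j < m ∧ C j ⊂ C m := by
      intro j
      by_contra hcon
      push_neg at hcon
      have hconst : ∀ m, C m ⊆ C j := by
        intro m
        rcases le_or_gt m j with h | h
        · exact hCmono h
        · have hsub := hCmono h.le
          have hne := hcon m h
          rw [Set.ssubset_iff_subset_ne] at hne
          push_neg at hne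
          exact le_of_eq (hne hsub).symm
      apply hCneW j
      apply subset_antisymm
      · exact hCW j
      · rw [hWunion]
        have h3 : varGen L (⋃ k, C k) ⊆ varGen L (C j) :=
          varGen_mono (Set.iUnion_subset hconst)
        rwa [show varGen L (C j) = C j from varGen_modClass _] at h3
    choose nxt hnxt1 hnxt2 using hCnotconst
    apply h1
    refine ⟨fun i => C (Nat.rec 0 (fun _ ih => nxt ih) i), fun i => ⟨_, rfl⟩,
      fun i => hnxt2 _, ?_⟩
    have hφmono : StrictMono (fun i => (Nat.rec 0 (fun _ ih => nxt ih) i : ℕ)) :=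
      strictMono_nat_of_lt_succ (fun i => hnxt1 _)
    have hun : (⋃ i, C (Nat.rec 0 (fun _ ih => nxt ih) i)) = ⋃ k, C k := by
      apply subset_antisymm
      · exact Set.iUnion_subset (fun i => Set.subset_iUnion C _)
      · exact Set.iUnion_subset (fun k =>
          (hCmono hφmono.le_apply).trans
            (Set.subset_iUnion (fun i => C (Nat.rec 0 (fun _ ih => nxt ih) i)) k))
    rw [hun]
    exact hWunion
  · -- (2) → (1)
    rintro ⟨B, hBfin, hWB⟩ ⟨C, hCvar, hCss, hWC⟩
    have hCmono : ∀ {i j : ℕ}, i ≤ j → C i ⊆ C j := by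
      intro i j hij
      exact (monotone_nat_of_le_succ (fun k => (hCss k).1)) hij
    have hCW : ∀ i, C i ⊆ W := fun i => by
      rw [hWC]; exact (Set.subset_iUnion C i).trans (subset_varGen _)
    have hBW : B ∈ W := by rw [hWB]; exact subset_varGen _ rfl
    rcases isEmpty_or_nonempty B.carrier with hBe | hBne
    · have hBsat : ∀ e, B.Sat e := fun e v => hBe.elim (e.2.1.realize v)
      obtain ⟨E0, hE0⟩ := hCvar 0
      have hWC0 : W ⊆ C 0 := by
        rw [hWB, hE0]; exact varGen_singleton_subset (fun e _ => hBsat e)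
      exact (hCss 0).2 ((hCW 1).trans hWC0)
    · obtain ⟨n, ⟨ε⟩⟩ := Finite.exists_equiv_fin B.carrier
      haveI hQfin : Finite (Quotient (termRelSetoid L W n)) := tq_finite hE hLFW n
      set D : ℕ → Set (Quotient (termRelSetoid L W n) × Quotient (termRelSetoid L W n)) :=
        fun i => {c | ∃ p q : L.Term (Fin n), Quotient.mk (termRelSetoid L W n) p = c.1 ∧
          Quotient.mk (termRelSetoid L W n) q = c.2 ∧
          ∀ A ∈ C i, A.Sat ⟨n, (p, q)⟩} with hD
      have hDanti : ∀ {i j : ℕ}, i ≤ j → D j ⊆ D i := by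
        rintro i j hij c ⟨p, q, h1, h2, h3⟩
        exact ⟨p, q, h1, h2, fun A hA => h3 A (hCmono hij hA)⟩
      obtain ⟨i0, hi0⟩ : ∃ i0, ∀ i, (D i0).ncard ≤ (D i).ncard := by
        obtain ⟨i0, hval⟩ := Nat.sInf_mem (Set.range_nonempty (fun i => (D i).ncard))
        exact ⟨i0, fun i => le_of_eq_of_le hval (Nat.sInf_le ⟨i, rfl⟩)⟩
      have hDeq : ∀ i, i0 ≤ i → D i = D i0 := fun i hi =>
        Set.eq_of_subset_of_ncard_le (hDanti hi) (hi0 i) (Set.toFinite _)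
      obtain ⟨E0, hE0⟩ := hCvar i0
      have hBsatE : ∀ e, (∀ A ∈ C i0, A.Sat e) → B.Sat e := by
        intro e hsat v
        have hrel : ∀ A' ∈ (⋃ i, C i),
            A'.Sat ⟨n, (e.2.1.relabel (fun j => ε (v j)), e.2.2.relabel (fun j => ε (v j)))⟩ := by
          intro A' hA'
          obtain ⟨j, hAj⟩ := Set.mem_iUnion.mp hA'
          rcases le_total j i0 with hj | hj
          · exact Alg.sat_relabel _ (hsat A' (hCmono hj hAj))
          · have hmem : (Quotient.mk (termRelSetoid L W n) (e.2.1.relabel (fun j => ε (v j))),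
                Quotient.mk (termRelSetoid L W n) (e.2.2.relabel (fun j => ε (v j)))) ∈ D i0 :=
              ⟨_, _, rfl, rfl, fun A'' hA'' => Alg.sat_relabel _ (hsat A'' hA'')⟩
            rw [← hDeq j hj] at hmem
            obtain ⟨p', q', hp', hq', hsat'⟩ := hmem
            intro u
            have hA'W : A' ∈ W := hCW j hAj
            have h1 : (termRelSetoid L W n).r p' (e.2.1.relabel (fun j => ε (v j))) :=
              Quotient.exact hp'
            have h2 : (termRelSetoid L W n).r q' (e.2.2.relabel (fun j => ε (v j))) :=
              Quotient.exact hq'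
            have h3 := hsat' A' hAj u
            rw [← h1 A' hA'W u, ← h2 A' hA'W u]
            exact h3
        have hBrel : B.Sat ⟨n, (e.2.1.relabel (fun j => ε (v j)),
            e.2.2.relabel (fun j => ε (v j)))⟩ := by
          have hBW' := hBW
          rw [hWC] at hBW'
          exact hBW' _ hrel
        have h4 := hBrel ε.symm
        rw [Term.realize_relabel, Term.realize_relabel] at h4
        have h5 : (⇑ε.symm ∘ fun j => ε (v j)) = v := funext fun j => ε.symm_apply_apply (v j)
        rwa [h5] at h4
      have hBC : B ∈ ModClass L E0 := by
        intro e he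
        exact hBsatE e (fun A hA => by rw [hE0] at hA; exact hA e he)
      have hWC0 : W ⊆ C i0 := by
        rw [hWB, hE0]
        exact varGen_singleton_subset (fun e he => hBC e he)
      exact (hCss i0).2 ((hCW (i0+1)).trans hWC0)
end

section
/- Let V be a locally finite variety of arbitrary type F, and let W be a subvariety of V. Then the following are equivalent: (1) there exists no infinite strictly descending chain of varieties V ⊇ V_1 ⊃ V_2 ⊃ V_3 ⊃ ⋯ with W = ⋂_{i∈ℕ} V_i; (2) there is k ∈ ℕ and a set Σ of identities, each containing at most k variables, with W = V ∩ Mod(Σ); (3) there is a finite set Φ of identities with W = V ∩ Mod(Φ). -/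
open FirstOrder FirstOrder.Language

universe u v

namespace LFV

variable {L : FirstOrder.Language.{u, v}}

lemma modClass_mono {E E' : Set (Identity L)} (h : E ⊆ E') :
    ModClass L E' ⊆ ModClass L E := fun _ hA e he => hA e (h he)

lemma modClass_union (E E' : Set (Identity L)) :
    ModClass L (E ∪ E') = ModClass L E ∩ ModClass L E' := by
  ext A
  simp only [ModClass, Set.mem_setOf_eq, Set.mem_inter_iff, Set.mem_union, or_imp, forall_and]

/-- padding a term to more variables -/
lemma realize_pad {A : Type*} [L.Structure A] {m k : ℕ} (h : m ≤ k) (p : L.Term (Fin m))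
    (v : Fin k → A) :
    (p.subst fun i => Term.var (Fin.castLE h i)).realize v
      = p.realize fun i => v (Fin.castLE h i) := by
  rw [Term.realize_subst]
  rfl

lemma sat_of_pad_sat {A : Alg L} {m k : ℕ} (h : m ≤ k) (p q : L.Term (Fin m))
    (hpq : ∀ v : Fin k → A.carrier,
      (p.subst fun i => Term.var (Fin.castLE h i)).realize v
        = (q.subst fun i => Term.var (Fin.castLE h i)).realize v) :
    ∀ w : Fin m → A.carrier, p.realize w = q.realize w := by
  intro w
  rcases isEmpty_or_nonempty A.carrier with hA | hA
  · exact isEmptyElim (p.realize w)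
  · have hv := hpq (fun j => if hj : (j : ℕ) < m then w ⟨j, hj⟩ else Classical.arbitrary _)
    rw [realize_pad, realize_pad] at hv
    have hw : (fun i : Fin m =>
        (fun j : Fin k => if hj : (j : ℕ) < m then w ⟨j, hj⟩ else Classical.arbitrary _)
          (Fin.castLE h i)) = w := by
      funext i
      simp
    rwa [hw] at hv

end LFV

section Quot
namespace LFV
variable {L : FirstOrder.Language.{u, v}}

/-- the relation of being an identity of the class `K` (in `n` variables) -/
def idRel (K : Set (Alg L)) (n : ℕ) (p q : L.Term (Fin n)) : Prop :=
  ∀ A ∈ K, ∀ w : Fin n → A.carrier, p.realize w = q.realize w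

def idSetoid (K : Set (Alg L)) (n : ℕ) : Setoid (L.Term (Fin n)) :=
  ⟨idRel K n,
    ⟨fun _ _ _ _ => rfl, fun h A hA w => (h A hA w).symm,
      fun h h' A hA w => (h A hA w).trans (h' A hA w)⟩⟩

variable (K : Set (Alg L)) (n : ℕ)

noncomputable instance freeStructure : L.Structure (Quotient (idSetoid K n)) where
  funMap f qs := Quotient.mk _ (Term.func f fun i => (qs i).out)
  RelMap _ _ := False

variable {K n}

lemma mk_func {m : ℕ} (f : L.Functions m) (ts : Fin m → L.Term (Fin n)) :
    (Structure.funMap f fun i => Quotient.mk (idSetoid K n) (ts i))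
      = Quotient.mk (idSetoid K n) (Term.func f ts) := by
  apply Quotient.sound
  intro A hA w
  rw [Term.realize_func, Term.realize_func]
  refine congrArg (Structure.funMap f) (funext fun i => ?_)
  exact Quotient.exact (Quotient.out_eq (Quotient.mk (idSetoid K n) (ts i))) A hA w

lemma realize_mk {m : ℕ} (t : L.Term (Fin m)) (u : Fin m → L.Term (Fin n)) :
    (t.realize fun i => Quotient.mk (idSetoid K n) (u i))
      = Quotient.mk (idSetoid K n) (t.subst u) := by
  induction t with
  | var i => rfl
  | func f ts ih =>
    rw [Term.realize_func]
    simp only [ih]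
    exact mk_func f _

lemma freeQ_sat {m : ℕ} (p q : L.Term (Fin m))
    (h : ∀ u : Fin m → L.Term (Fin n), idRel K n (p.subst u) (q.subst u)) :
    ∀ w : Fin m → Quotient (idSetoid K n), p.realize w = q.realize w := by
  intro w
  have hw : w = fun i => Quotient.mk (idSetoid K n) ((w i).out) :=
    funext fun i => (Quotient.out_eq _).symm
  rw [hw, realize_mk, realize_mk]
  exact Quotient.sound (h _)

lemma rel_of_freeQ_sat (p q : L.Term (Fin n))
    (h : ∀ w : Fin n → Quotient (idSetoid K n), p.realize w = q.realize w) :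
    idRel K n p q := by
  have := h (fun i => Quotient.mk (idSetoid K n) (Term.var i))
  rw [realize_mk, realize_mk] at this
  have hsv : ∀ t : L.Term (Fin n), t.subst Term.var = t := by
    intro t
    induction t with
    | var i => rfl
    | func f ts ih => simp only [Term.subst, ih]
  rw [hsv, hsv] at this
  exact Quotient.exact this

end LFV
end Quot

namespace LFV
variable {L : FirstOrder.Language.{u, v}}

instance piStruct {ι : Type} (M : ι → Type) [∀ i, L.Structure (M i)] :
    L.Structure (∀ i, M i) where
  funMap f xs i := Structure.funMap f fun j => xs j i
  RelMap _ _ := False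

lemma realize_pi {ι : Type} {M : ι → Type} [∀ i, L.Structure (M i)] {α : Type*}
    (t : L.Term α) (v : α → ∀ i, M i) (i : ι) :
    t.realize v i = t.realize (fun a => v a i) := by
  induction t with
  | var a => rfl
  | func f ts ih =>
    rw [Term.realize_func, Term.realize_func]
    show Structure.funMap f (fun j => (ts j).realize v i) = _
    exact congrArg (Structure.funMap f) (funext fun j => ih j)

lemma sat_substructure {M : Type*} [L.Structure M] (S : L.Substructure M) {m : ℕ}
    (p q : L.Term (Fin m)) (h : ∀ v : Fin m → M, p.realize v = q.realize v)
    (w : Fin m → S) : p.realize w = q.realize w := by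
  apply Subtype.val_injective
  have h1 := HomClass.realize_term (L := L) S.subtype (t := p) (v := w)
  have h2 := HomClass.realize_term (L := L) S.subtype (t := q) (v := w)
  have h0 : Term.realize (⇑S.subtype ∘ w) p = Term.realize (⇑S.subtype ∘ w) q := h _
  rw [h1, h2] at h0
  exact h0

lemma realize_mem_closure {M : Type*} [L.Structure M] {α : Type*} (t : L.Term α) (v : α → M) :
    t.realize v ∈ Substructure.closure L (Set.range v) := by
  induction t with
  | var a => exact Substructure.subset_closure ⟨a, rfl⟩
  | func f ts ih =>
    rw [Term.realize_func]
    exact Substructure.fun_mem _ f _ ih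

lemma closure_self_fg {M : Type*} [L.Structure M] (s : Set M) :
    Substructure.closure L
      ((fun x : Substructure.closure L s => (x : M)) ⁻¹' s) = ⊤ := by
  set N := Substructure.closure L s with hN
  have hsub : s ⊆ (N : Set M) := Substructure.subset_closure
  apply Substructure.map_injective_of_injective
      (f := N.subtype.toHom) Subtype.val_injective
  rw [Substructure.map_closure]
  have himg : (N.subtype.toHom '' ((fun x : N => (x : M)) ⁻¹' s)) = s := by
    ext x
    constructor
    · rintro ⟨y, hy, rfl⟩; exact hy
    · intro hx; exact ⟨⟨x, hsub hx⟩, hx, rfl⟩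
  rw [himg, ← Hom.range_eq_map, Substructure.range_subtype]

end LFV

namespace LFV
variable {L : FirstOrder.Language.{u, v}}

/-- Key finiteness: for a locally finite variety `V`, the free algebra quotient
on `n` generators is finite. -/
lemma finite_freeQ {V : Set (Alg L)} {EV : Set (Identity L)} (hV : V = ModClass L EV)
    (hLF : IsLocallyFinite L V) (n : ℕ) :
    Finite (Quotient (idSetoid V n)) := by
  by_contra hfin
  rw [not_finite_iff_infinite] at hfin
  obtain g := hfin.natEmbedding
  set t : ℕ → L.Term (Fin n) := fun i => (g i).out with ht
  have hne : ∀ p : {p : ℕ × ℕ // p.1 ≠ p.2}, ¬ idRel V n (t p.1.1) (t p.1.2) := by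
    rintro ⟨⟨i, j⟩, hij⟩ hrel
    apply hij
    apply g.injective
    rw [← Quotient.out_eq (g i), ← Quotient.out_eq (g j)]
    exact Quotient.sound hrel
  have hch : ∀ p : {p : ℕ × ℕ // p.1 ≠ p.2}, ∃ A : Alg L, A ∈ V ∧
      ∃ w : Fin n → A.carrier, (t p.1.1).realize w ≠ (t p.1.2).realize w := by
    intro p
    by_contra hc
    push_neg at hc
    exact hne p fun A hA w => hc A hA w
  choose A hA w hw using hch
  set P : Type := ∀ p, (A p).carrier with hP
  set PA : Alg L := ⟨P⟩ with hPA
  have hPV : PA ∈ V := by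
    rw [hV]
    intro e he v
    funext p
    rw [realize_pi, realize_pi]
    exact (hV ▸ hA p) e he _
  set W' : Fin n → P := fun k p => w p k with hW'
  set N := Substructure.closure L (Set.range W') with hN
  set NA : Alg L := ⟨↥N⟩ with hNA
  have hNV : NA ∈ V := by
    rw [hV]
    intro e he v
    exact sat_substructure N _ _ (fun v' => (hV ▸ hPV) e he v') v
  have hNfg : FinGen L NA := by
    refine ⟨(fun x : N => (x : P)) ⁻¹' (Set.range W'), ?_, closure_self_fg _⟩
    exact Set.Finite.preimage (Set.injOn_of_injective Subtype.val_injective)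
      (Set.finite_range W')
  haveI hNfin : Finite NA.carrier := hLF NA hNV hNfg
  have hc : ∀ i : ℕ, (t i).realize W' ∈ N := fun i => realize_mem_closure (t i) W'
  have hinj : Function.Injective (fun i : ℕ => (⟨(t i).realize W', hc i⟩ : N)) := by
    intro i j hij
    by_contra hne'
    apply hw ⟨(i, j), hne'⟩
    have : (t i).realize W' = (t j).realize W' := congrArg Subtype.val hij
    have := congrFun this ⟨(i, j), hne'⟩
    rwa [realize_pi, realize_pi] at this
  haveI := Finite.of_injective _ hinj
  exact not_finite ℕ

/-- transporting a structure along an equiv -/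
def transportStructure {M : Type*} [L.Structure M] {N : Type*} (e : M ≃ N) : L.Structure N where
  funMap f xs := e (Structure.funMap f fun i => e.symm (xs i))
  RelMap _ _ := False

lemma transport_realize {M : Type*} [L.Structure M] {N : Type*} (e : M ≃ N) {α : Type*}
    (t : L.Term α) (v : α → M) :
    @Term.realize L N (transportStructure e) α (fun a => e (v a)) t = e (t.realize v) := by
  letI : L.Structure N := transportStructure e
  induction t with
  | var a => rfl
  | func f ts ih =>
    rw [Term.realize_func, Term.realize_func]
    show e (Structure.funMap f fun i =>
      e.symm (@Term.realize L N (transportStructure e) α (fun a => e (v a)) (ts i))) = _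
    simp only [ih, Equiv.symm_apply_apply]

lemma transport_sat {M : Type*} [L.Structure M] {N : Type*} (e : M ≃ N) {m : ℕ}
    (p q : L.Term (Fin m)) :
    (∀ w : Fin m → N, @Term.realize L N (transportStructure e) _ w p
        = @Term.realize L N (transportStructure e) _ w q) ↔
      (∀ w : Fin m → M, p.realize w = q.realize w) := by
  constructor
  · intro h w
    have := h (fun i => e (w i))
    rw [transport_realize, transport_realize] at this
    exact e.injective this
  · intro h w
    have hww : w = fun i => e (e.symm (w i)) := funext fun i => (e.apply_symm_apply _).symm
    rw [hww, transport_realize, transport_realize, h]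

end LFV

/-- **Lemma (finitely based subvarieties via DCC).** Let `V` be a locally finite
variety and `W` a subvariety of `V`. Then the following are equivalent:
1. there is no infinite strictly descending chain `V ⊇ V₁ ⊃ V₂ ⊃ ⋯` of varieties
   with `W = ⋂ᵢ Vᵢ`;
2. there are `k : ℕ` and a set `Σ'` of identities, each in at most `k` variables,
   with `W = V ∩ Mod(Σ')`;
3. there is a finite set `Φ` of identities with `W = V ∩ Mod(Φ)`. -/
theorem no_descending_chain_iff_finitely_based
    (L : FirstOrder.Language) [L.IsAlgebraic]
    (V : Set (Alg L)) (hV : IsVariety L V) (hLF : IsLocallyFinite L V)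
    (W : Set (Alg L)) (hW : IsVariety L W) (hWV : W ⊆ V) :
    List.TFAE
      [ ¬ ∃ C : ℕ → Set (Alg L),
            (∀ i, IsVariety L (C i)) ∧ C 0 ⊆ V ∧ (∀ i, C (i + 1) ⊂ C i) ∧
            W = ⋂ i, C i,
        ∃ (k : ℕ) (E : Set (Identity L)),
            (∀ e ∈ E, e.1 ≤ k) ∧ W = V ∩ ModClass L E,
        ∃ Φ : Set (Identity L), Φ.Finite ∧ W = V ∩ ModClass L Φ ] := by
  classical
  obtain ⟨EV, hEV⟩ := hV
  obtain ⟨EW, hEW⟩ := hW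
  tfae_have 1 → 2 := by
    intro h1
    by_contra h2
    apply h1
    set Idn : ℕ → Set (Identity L) := fun n => {e | e.1 ≤ n ∧ ∀ A ∈ W, A.Sat e} with hIdn
    set C : ℕ → Set (Alg L) := fun n => V ∩ ModClass L (Idn n) with hC
    have hCvar : ∀ n, IsVariety L (C n) := fun n =>
      ⟨EV ∪ Idn n, by
        show V ∩ ModClass L (Idn n) = ModClass L (EV ∪ Idn n)
        rw [LFV.modClass_union, hEV]⟩
    have hWC : ∀ n, W ⊆ C n := fun n A hA => ⟨hWV hA, fun e he => he.2 A hA⟩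
    have hCanti : Antitone C := by
      intro a b hab A hA
      exact ⟨hA.1, fun e he => hA.2 e ⟨he.1.trans hab, he.2⟩⟩
    have hCW : (⋂ n, C n) = W := by
      apply subset_antisymm
      · intro A hA
        rw [hEW]
        intro e he
        refine (Set.mem_iInter.mp hA e.1).2 e ⟨le_rfl, fun B hB => ?_⟩
        rw [hEW] at hB
        exact hB e he
      · exact Set.subset_iInter hWC
    have hne : ∀ n, W ≠ C n := fun n hEq => h2 ⟨n, Idn n, fun e he => he.1, by rw [hEq]⟩
    have key : ∀ m, ∃ m', m < m' ∧ C m' ⊂ C m := by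
      intro m
      by_contra hk
      push_neg at hk
      apply hne m
      apply subset_antisymm (hWC m)
      rw [← hCW]
      apply Set.subset_iInter
      intro j
      rcases le_or_gt j m with hj | hj
      · exact hCanti hj
      · have heq : C j = C m := by
          by_contra hne'
          exact hk j hj (Set.ssubset_iff_subset_ne.mpr ⟨hCanti hj.le, hne'⟩)
        exact heq.symm.subset
    choose nxt hlt hss using key
    have hgrow : ∀ j, j ≤ nxt^[j] 0 := by
      intro j
      induction j with
      | zero => exact Nat.zero_le _
      | succ j ih =>
        rw [Function.iterate_succ_apply']
        exact Nat.succ_le_of_lt (lt_of_le_of_lt ih (hlt _))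
    refine ⟨fun i => C (nxt^[i] 0), fun i => hCvar _, Set.inter_subset_left, ?_, ?_⟩
    · intro i
      show C (nxt^[i + 1] 0) ⊂ C (nxt^[i] 0)
      rw [Function.iterate_succ_apply']
      exact hss _
    · apply subset_antisymm
      · exact Set.subset_iInter fun i => hWC _
      · intro A hA
        rw [← hCW]
        exact Set.mem_iInter.mpr fun j => hCanti (hgrow j) (Set.mem_iInter.mp hA j)
  tfae_have 2 → 3 := by
    rintro ⟨k, E, hEk, hWE⟩
    haveI : Finite (Quotient (LFV.idSetoid V k)) := LFV.finite_freeQ hEV hLF k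
    set g : {e : Identity L // e ∈ E} →
        Quotient (LFV.idSetoid V k) × Quotient (LFV.idSetoid V k) := fun x =>
      (Quotient.mk _ (x.1.2.1.subst fun i => FirstOrder.Language.Term.var
          (Fin.castLE (hEk x.1 x.2) i)),
       Quotient.mk _ (x.1.2.2.subst fun i => FirstOrder.Language.Term.var
          (Fin.castLE (hEk x.1 x.2) i))) with hg
    have hrange : (Set.range g).Finite := Set.toFinite _
    have hsec' : ∀ y ∈ Set.range g, ∃ x, g x = y := fun y hy => hy
    choose sec hsec using hsec'
    refine ⟨{e | ∃ y, ∃ hy : y ∈ Set.range g, (sec y hy).1 = e}, hrange.dependent_image _, ?_⟩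
    apply subset_antisymm
    · rw [hWE]
      rintro A ⟨hAV, hAE⟩
      refine ⟨hAV, ?_⟩
      rintro e ⟨y, hy, rfl⟩
      exact hAE _ (sec y hy).2
    · rintro A ⟨hAV, hAΦ⟩
      rw [hWE]
      refine ⟨hAV, fun e he => ?_⟩
      have hy : g ⟨e, he⟩ ∈ Set.range g := ⟨⟨e, he⟩, rfl⟩
      have hAφ : A.Sat (sec (g ⟨e, he⟩) hy).1 := hAΦ _ ⟨g ⟨e, he⟩, hy, rfl⟩
      have hgφ := hsec (g ⟨e, he⟩) hy
      have h1 := Quotient.exact (congrArg Prod.fst hgφ)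
      have h2 := Quotient.exact (congrArg Prod.snd hgφ)
      refine LFV.sat_of_pad_sat (hEk e he) e.2.1 e.2.2 (fun v => ?_)
      refine (h1 A hAV v).symm.trans (Eq.trans ?_ (h2 A hAV v))
      rw [LFV.realize_pad, LFV.realize_pad]
      exact hAφ _
  tfae_have 3 → 1 := by
    rintro ⟨Φ, hΦfin, hWΦ⟩
    rintro ⟨C, hCvar, hC0, hCss, hWC⟩
    obtain ⟨n, hn⟩ : ∃ n, ∀ e ∈ Φ, e.1 ≤ n := by
      obtain ⟨n, hn⟩ := (hΦfin.image (fun e : Identity L => e.1)).bddAbove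
      exact ⟨n, fun e he => hn (Set.mem_image_of_mem _ he)⟩
    choose EC hEC using hCvar
    have hanti : Antitone C := antitone_nat_of_succ_le fun i => (hCss i).subset
    have hCV : ∀ i, C i ⊆ V := fun i => (hanti (Nat.zero_le i)).trans hC0
    haveI hQfin : Finite (Quotient (LFV.idSetoid V n)) := LFV.finite_freeQ hEV hLF n
    set S : ℕ → Set (Quotient (LFV.idSetoid V n) × Quotient (LFV.idSetoid V n)) :=
      fun j => {y | ∃ p q, LFV.idRel (C j) n p q ∧
        y = (Quotient.mk _ p, Quotient.mk _ q)} with hS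
    have hSmono : ∀ j j', j ≤ j' → S j ⊆ S j' := by
      rintro j j' hj y ⟨p, q, hpq, rfl⟩
      exact ⟨p, q, fun A hA w => hpq A (hanti hj hA) w, rfl⟩
    obtain ⟨i₀, hi₀⟩ : ∃ i₀, ∀ j, i₀ ≤ j → S j = S i₀ := by
      obtain ⟨y, hy, hmax⟩ := Set.Finite.exists_maximalFor id (Set.range S)
        (Set.toFinite _) (Set.range_nonempty S)
      obtain ⟨i₀, rfl⟩ := hy
      exact ⟨i₀, fun j hj => le_antisymm (hmax ⟨j, rfl⟩ (hSmono _ _ hj)) (hSmono _ _ hj)⟩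
    have hstab : ∀ j, i₀ ≤ j → ∀ p q, LFV.idRel (C j) n p q → LFV.idRel (C i₀) n p q := by
      intro j hj p q hpq
      have hmem : ((Quotient.mk (LFV.idSetoid V n) p, Quotient.mk (LFV.idSetoid V n) q)) ∈ S j :=
        ⟨p, q, hpq, rfl⟩
      rw [hi₀ j hj] at hmem
      obtain ⟨p', q', hp'q', hpair⟩ := hmem
      have hp : LFV.idRel V n p p' := Quotient.exact (congrArg Prod.fst hpair)
      have hq : LFV.idRel V n q q' := Quotient.exact (congrArg Prod.snd hpair)
      intro A hA w
      have hAV := hCV i₀ hA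
      calc p.realize w = p'.realize w := hp A hAV w
        _ = q'.realize w := hp'q' A hA w
        _ = q.realize w := (hq A hAV w).symm
    have hLFC : IsLocallyFinite L (C i₀) := fun A hA hfg => hLF A (hCV i₀ hA) hfg
    haveI hQC : Finite (Quotient (LFV.idSetoid (C i₀) n)) :=
      LFV.finite_freeQ (hEC i₀) hLFC n
    obtain ⟨m, ⟨eqv⟩⟩ := Finite.exists_equiv_fin (Quotient (LFV.idSetoid (C i₀) n))
    letI finStr : L.Structure (Fin m) := LFV.transportStructure eqv
    set F : Alg L := ⟨Fin m⟩ with hF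
    have hFsat : ∀ (mm : ℕ) (p q : L.Term (Fin mm)),
        (∀ u : Fin mm → L.Term (Fin n), LFV.idRel (C i₀) n (p.subst u) (q.subst u)) →
        ∀ w : Fin mm → F.carrier, p.realize w = q.realize w := by
      intro mm p q h
      exact (LFV.transport_sat eqv p q).mpr (LFV.freeQ_sat p q h)
    have hFC : ∀ j, F ∈ C j := by
      intro j
      rw [hEC j]
      intro e he
      refine hFsat e.1 e.2.1 e.2.2 (fun u => ?_)
      have hK : LFV.idRel (C j) n (e.2.1.subst u) (e.2.2.subst u) := by
        intro A hA w
        rw [FirstOrder.Language.Term.realize_subst, FirstOrder.Language.Term.realize_subst]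
        have hAe : A.Sat e := by rw [hEC j] at hA; exact hA e he
        exact hAe _
      rcases le_total j i₀ with hj | hj
      · exact fun A hA w => hK A (hanti hj hA) w
      · exact hstab j hj _ _ hK
    have hFW : F ∈ W := by
      rw [hWC]
      exact Set.mem_iInter.mpr hFC
    have hFΦ : ∀ e ∈ Φ, F.Sat e := by
      rw [hWΦ] at hFW
      exact fun e he => hFW.2 e he
    have hCsub : C i₀ ⊆ W := by
      rw [hWΦ]
      intro A hA
      refine ⟨hCV i₀ hA, fun e he => ?_⟩
      have hq : ∀ w : Fin e.1 → Quotient (LFV.idSetoid (C i₀) n),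
          e.2.1.realize w = e.2.2.realize w :=
        (LFV.transport_sat eqv e.2.1 e.2.2).mp (hFΦ e he)
      have hgen := hq (fun i => Quotient.mk _ (FirstOrder.Language.Term.var
        (Fin.castLE (hn e he) i)))
      rw [LFV.realize_mk, LFV.realize_mk] at hgen
      have hpq : LFV.idRel (C i₀) n
          (e.2.1.subst fun i => FirstOrder.Language.Term.var (Fin.castLE (hn e he) i))
          (e.2.2.subst fun i => FirstOrder.Language.Term.var (Fin.castLE (hn e he) i)) :=
        Quotient.exact hgen
      exact LFV.sat_of_pad_sat (hn e he) e.2.1 e.2.2 (fun v => hpq A hA v)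
    have hfin : C i₀ ⊆ C (i₀ + 1) := by
      intro A hA
      have hAW := hCsub hA
      rw [hWC] at hAW
      exact Set.mem_iInter.mp hAW (i₀ + 1)
    exact (hCss i₀).not_subset hfin
  tfae_finish
end

section
/- Let A be a finite nonempty set and let A^+ = ⋃_{n∈ℕ} A^n be the set of nonempty finite tuples over A, ordered by ≤_a. Then (A^+, ≤_a) is well partially ordered, and the set U(A^+, ≤_a) of upward closed subsets of A^+, ordered by inclusion, satisfies the ascending chain condition. -/
/-- `i` is the position of the first occurrence of the letter `l.get i` in `l`. -/
def IsFirstOcc {A : Type} (l : List A) (i : Fin l.length) : Prop :=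
  ∀ j : Fin l.length, j < i → l.get j ≠ l.get i

/-- `h` witnesses `a ≤ₐ b`: `h` is injective and increasing, `aᵢ = b_{h i}`,
`a` and `b` have the same set of letters, and `h` maps the first occurrence of
each letter of `a` to the first occurrence of that letter in `b`. -/
def WitnessesLeA {A : Type} (a b : List A) (h : Fin a.length → Fin b.length) : Prop :=
  StrictMono h ∧
  (∀ i : Fin a.length, a.get i = b.get (h i)) ∧
  (∀ x : A, x ∈ a ↔ x ∈ b) ∧
  (∀ i : Fin a.length, IsFirstOcc a i → ∀ j : Fin b.length, j < h i → b.get j ≠ a.get i)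

/-- The partial order `≤ₐ` on tuples over `A`. -/
def LeA {A : Type} (a b : List A) : Prop :=
  ∃ h : Fin a.length → Fin b.length, WitnessesLeA a b h

/-- `A⁺`: the set of nonempty finite tuples over `A`. -/
def TupPlus (A : Type) : Type := {l : List A // l ≠ []}

open Classical in
noncomputable def TagT {A : Type} (a : List A) : List (Set A × A × Bool) :=
  List.ofFn (fun i : Fin a.length => ({x | x ∈ a}, a.get i, decide (IsFirstOcc a i)))

lemma TagT_length {A : Type} (a : List A) : (TagT a).length = a.length := by
  simp [TagT]

open Classical in
lemma TagT_get {A : Type} (a : List A) (i : Fin (TagT a).length) :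
    (TagT a).get i = ({x | x ∈ a}, a.get (Fin.cast (TagT_length a) i),
      decide (IsFirstOcc a (Fin.cast (TagT_length a) i))) := by
  exact List.get_ofFn _ i

lemma leA_of_tagT_sublist {A : Type} {a b : List A} (ha : a ≠ [])
    (hs : List.Sublist (TagT a) (TagT b)) : LeA a b := by
  classical
  -- same letter sets
  have hmem : ∀ x : A, x ∈ a ↔ x ∈ b := by
    have h0 : 0 < (TagT a).length := by
      rw [TagT_length]; exact List.length_pos_iff.2 ha
    have hx : (TagT a).get ⟨0, h0⟩ ∈ TagT b := hs.subset (List.get_mem (TagT a) ⟨0, h0⟩)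
    rw [TagT_get] at hx
    have : ∃ j : Fin (TagT b).length, (TagT b).get j =
        ({x | x ∈ a}, a.get (Fin.cast (TagT_length a) ⟨0, h0⟩),
          decide (IsFirstOcc a (Fin.cast (TagT_length a) ⟨0, h0⟩))) :=
      List.mem_iff_get.1 hx
    obtain ⟨j, hj⟩ := this
    rw [TagT_get] at hj
    have hset : ({x | x ∈ b} : Set A) = {x | x ∈ a} := congrArg Prod.fst hj
    intro x
    constructor
    · intro hxa; exact (Set.ext_iff.1 hset x).2 hxa
    · intro hxb; exact (Set.ext_iff.1 hset x).1 hxb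
  obtain ⟨e, he⟩ := List.sublist_iff_exists_fin_orderEmbedding_get_eq.1 hs
  refine ⟨fun i => Fin.cast (TagT_length b) (e (Fin.cast (TagT_length a).symm i)),
    ?_, ?_, hmem, ?_⟩
  · intro i j hij
    have : e (Fin.cast (TagT_length a).symm i) < e (Fin.cast (TagT_length a).symm j) := by
      apply e.strictMono
      exact hij
    exact this
  · intro i
    have := he (Fin.cast (TagT_length a).symm i)
    rw [TagT_get, TagT_get] at this
    have h2 := congrArg (fun p => p.2.1) this
    simpa using h2
  · intro i hfo j hj
    have := he (Fin.cast (TagT_length a).symm i)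
    rw [TagT_get, TagT_get] at this
    have h2 : a.get i = b.get (Fin.cast (TagT_length b)
        (e (Fin.cast (TagT_length a).symm i))) := by
      have := congrArg (fun p => p.2.1) this
      simpa using this
    have h3 : decide (IsFirstOcc a i) = decide (IsFirstOcc b (Fin.cast (TagT_length b)
        (e (Fin.cast (TagT_length a).symm i)))) := by
      have := congrArg (fun p => p.2.2) this
      simpa using this
    have hfo' : IsFirstOcc b (Fin.cast (TagT_length b)
        (e (Fin.cast (TagT_length a).symm i))) := by
      have := decide_eq_decide.1 h3
      exact this.1 hfo
    intro heq
    exact hfo' j hj (heq.trans h2)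

lemma exists_leA {A : Type} [Finite A] (f : ℕ → List A) (hne : ∀ n, f n ≠ []) :
    ∃ m n, m < n ∧ LeA (f m) (f n) := by
  classical
  have hpwo : (Set.univ : Set (Set A × A × Bool)).PartiallyWellOrderedOn (· = ·) := by
    intro g
    obtain ⟨m, n, hmn, h⟩ := Finite.exists_ne_map_eq_of_infinite g
    rcases hmn.lt_or_gt with h' | h'
    · exact ⟨m, n, h', congrArg Subtype.val h⟩
    · exact ⟨n, m, h', congrArg Subtype.val h.symm⟩
  have hH := hpwo.partiallyWellOrderedOn_sublistForall₂ (· = ·)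
  obtain ⟨m, n, hmn, hsub⟩ := hH (fun k => ⟨TagT (f k), fun x _ => Set.mem_univ x⟩)
  obtain ⟨l, hl1, hl2⟩ := List.sublistForall₂_iff.1 hsub
  have : TagT (f m) = l := by
    have := List.forall₂_eq_eq_eq (α := Set A × A × Bool)
    rw [this] at hl1
    exact hl1
  subst this
  exact ⟨m, n, hmn, leA_of_tagT_sublist (hne m) hl2⟩

lemma leA_refl {A : Type} (a : List A) : LeA a a :=
  ⟨id, strictMono_id, fun _ => rfl, fun _ => Iff.rfl, fun i hfo j hj => hfo j hj⟩

lemma leA_trans {A : Type} {a b c : List A} (h1 : LeA a b) (h2 : LeA b c) : LeA a c := by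
  obtain ⟨g, hg1, hg2, hg3, hg4⟩ := h1
  obtain ⟨k, hk1, hk2, hk3, hk4⟩ := h2
  refine ⟨k ∘ g, hk1.comp hg1, fun i => (hg2 i).trans (hk2 (g i)), fun x => (hg3 x).trans (hk3 x), ?_⟩
  intro i hfo j hj
  -- g i is the first occurrence of a.get i in b
  have hfo' : IsFirstOcc b (g i) := by
    intro j' hj' hne
    exact hg4 i hfo j' hj' (hne.trans (hg2 i).symm)
  intro heq
  exact hk4 (g i) hfo' j hj (heq.trans (hg2 i))

lemma fin_le_apply {n : ℕ} (g : Fin n → Fin n) (hg : StrictMono g) :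
    ∀ i : Fin n, (i : ℕ) ≤ g i := by
  intro i
  obtain ⟨k, hk⟩ := i
  induction k with
  | zero => exact Nat.zero_le _
  | succ m ih =>
    have hm : m < n := Nat.lt_of_succ_lt hk
    have h1 : (⟨m, hm⟩ : Fin n) < ⟨m + 1, hk⟩ := by
      simp [Fin.lt_def]
    have h2 := hg h1
    have h3 := ih hm
    rw [Fin.lt_def] at h2
    have hc : ((⟨m + 1, hk⟩ : Fin n) : ℕ) = m + 1 := rfl
    have hd : ((⟨m, hm⟩ : Fin n) : ℕ) = m := rfl
    omega

lemma fin_strictMono_id {n : ℕ} (g : Fin n → Fin n) (hg : StrictMono g) : ∀ i, g i = i := by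
  have hge : ∀ i : Fin n, (g i : ℕ) ≤ i := by
    have hg' : StrictMono (fun i : Fin n => (g i.rev).rev) := by
      intro i j hij
      have : j.rev < i.rev := by
        rw [Fin.lt_def, Fin.val_rev, Fin.val_rev]
        have := i.isLt; have := j.isLt
        rw [Fin.lt_def] at hij
        omega
      have := hg this
      rw [Fin.lt_def, Fin.val_rev, Fin.val_rev]
      rw [Fin.lt_def] at this
      have := (g j.rev).isLt; have := (g i.rev).isLt
      omega
    intro i
    have := fin_le_apply _ hg' i.rev
    rw [Fin.rev_rev] at this
    rw [Fin.val_rev] at this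
    have h1 := i.isLt; have h2 := (g i).isLt
    have h3 : ((g i).rev : ℕ) = n - ((g i : ℕ) + 1) := Fin.val_rev _
    omega
  intro i
  exact Fin.ext (le_antisymm (hge i) (fin_le_apply g hg i))

lemma leA_antisymm {A : Type} {a b : List A} (h1 : LeA a b) (h2 : LeA b a) : a = b := by
  obtain ⟨g, hg1, hg2, -, -⟩ := h1
  obtain ⟨k, hk1, -, -, -⟩ := h2
  have hab : a.length ≤ b.length := by
    simpa using Fintype.card_le_of_injective g hg1.injective
  have hba : b.length ≤ a.length := by
    simpa using Fintype.card_le_of_injective k hk1.injective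
  have hlen : a.length = b.length := le_antisymm hab hba
  apply List.ext_get hlen
  intro i hi hi'
  have hg' : StrictMono (fun j : Fin a.length => Fin.cast hlen.symm (g j)) := by
    intro x y hxy
    exact hg1 hxy
  have hid := fin_strictMono_id _ hg' ⟨i, hi⟩
  have : (g ⟨i, hi⟩ : ℕ) = i := by
    have := congrArg Fin.val hid
    simpa using this
  rw [hg2 ⟨i, hi⟩]
  congr 1
  exact Fin.ext this

/-- **Proposition (well partial order on tuples).** For a finite nonempty set `A`,
the ordered set `(A⁺, ≤ₐ)` is well partially ordered (it has no infinite strictly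
descending chains and no infinite antichains), and the set of upward closed subsets
of `A⁺`, ordered by inclusion, satisfies the ascending chain condition. -/
theorem tupPlus_wpo_and_acc_upward_closed
    (A : Type) [Finite A] [Nonempty A] :
    ((¬ ∃ f : ℕ → TupPlus A, ∀ i, LeA (f (i + 1)).1 (f i).1 ∧ f (i + 1) ≠ f i) ∧
      ¬ ∃ f : ℕ → TupPlus A, ∀ i j, i ≠ j → ¬ LeA (f i).1 (f j).1) ∧
    ¬ ∃ S : ℕ → Set (TupPlus A),
        (∀ i, ∀ x ∈ S i, ∀ y : TupPlus A, LeA x.1 y.1 → y ∈ S i) ∧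
        (∀ i, S i ⊂ S (i + 1)) := by
  classical
  refine ⟨⟨?_, ?_⟩, ?_⟩
  · rintro ⟨f, hf⟩
    have hchain : ∀ i j, i ≤ j → LeA (f j).1 (f i).1 := by
      intro i j hij
      induction j with
      | zero =>
        have h0 : i = 0 := Nat.le_zero.1 hij
        subst h0; exact leA_refl _
      | succ n ih =>
        rcases Nat.lt_or_ge i (n + 1) with h | h
        · exact leA_trans (hf n).1 (ih (Nat.lt_succ_iff.1 h))
        · have : i = n + 1 := le_antisymm (Nat.le_of_lt_succ (Nat.lt_succ_of_le hij)) h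
          -- i ≤ n+1 and i ≥ n+1
          subst this
          exact leA_refl _
    obtain ⟨m, n, hmn, hle⟩ := exists_leA (fun k => (f k).1) (fun k => (f k).2)
    have h1 : LeA (f m).1 (f (m + 1)).1 :=
      leA_trans hle (hchain (m + 1) n hmn)
    have h2 := leA_antisymm (hf m).1 h1
    exact (hf m).2 (Subtype.ext h2)
  · rintro ⟨f, hf⟩
    obtain ⟨m, n, hmn, hle⟩ := exists_leA (fun k => (f k).1) (fun k => (f k).2)
    exact hf m n (Nat.ne_of_lt hmn) hle
  · rintro ⟨S, hup, hchain⟩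
    have hx : ∀ i, ∃ x : TupPlus A, x ∈ S (i + 1) ∧ x ∉ S i := by
      intro i
      obtain ⟨x, hx1, hx2⟩ := Set.exists_of_ssubset (hchain i)
      exact ⟨x, hx1, hx2⟩
    choose g hg1 hg2 using hx
    have hmono : ∀ i j, i ≤ j → S i ⊆ S j := by
      intro i j hij
      induction j with
      | zero => rw [Nat.le_zero.1 hij]
      | succ n ih =>
        rcases Nat.lt_or_ge i (n + 1) with h | h
        · exact (ih (Nat.lt_succ_iff.1 h)).trans (hchain n).subset
        · have : i = n + 1 := le_antisymm hij h
          subst this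
          exact subset_rfl
    obtain ⟨m, n, hmn, hle⟩ := exists_leA (fun k => (g k).1) (fun k => (g k).2)
    have : g m ∈ S n := hmono (m + 1) n hmn (hg1 m)
    exact hg2 n (hup n (g m) this (g n) hle)
end

section
/- Let t ∈ ℕ, A = {1,2,…,t}, a ∈ A^m, b ∈ A^n, and let h : {1,…,m} → {1,…,n} be a function witnessing a ≤_a b. Define T_{a,b} : {1,…,n} → {1,…,m} by T_{a,b}(j) = h^{-1}(j) if j ∈ ran(h), and otherwise T_{a,b}(j) = min{ i : a_i = b_j }. Let c ∈ A^m with c <_lex a (in the lexicographic order on A^m induced by the natural order on A). Then (1) the tuple (a_{T_{a,b}(j)})_{j=1}^n equals b, and (2) the tuple (c_{T_{a,b}(j)})_{j=1}^n is strictly lexicographically smaller than b. -/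
/-- The strict lexicographic order on tuples `Fin m → Fin t`
(for `A = {1, …, t}` with its natural order). -/
def LtLex {m t : ℕ} (c a : Fin m → Fin t) : Prop :=
  ∃ i : Fin m, (∀ j : Fin m, j < i → c j = a j) ∧ c i < a i

/-- `h` witnesses `a ≤ₐ b` for tuples `a ∈ Aᵐ`, `b ∈ Aⁿ` over `A = {1, …, t}`:
`h` is injective and increasing, `aᵢ = b_{h i}`, `a` and `b` have the same set of
letters, and `h` maps the first occurrence of each letter of `a` to the first
occurrence of that letter in `b`. -/
def WitnessesF {t m n : ℕ} (a : Fin m → Fin t) (b : Fin n → Fin t)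
    (h : Fin m → Fin n) : Prop :=
  StrictMono h ∧
  (∀ i : Fin m, a i = b (h i)) ∧
  Set.range a = Set.range b ∧
  (∀ i : Fin m, (∀ i' : Fin m, i' < i → a i' ≠ a i) →
    ∀ j : Fin n, j < h i → b j ≠ a i)

/-- **Lemma (substitution along a witness preserves lexicographic order).**
Let `a ∈ Aᵐ`, `b ∈ Aⁿ` over `A = {1, …, t}`, let `h` witness `a ≤ₐ b`, and let
`T = T_{a,b} : {1,…,n} → {1,…,m}` be defined by `T j = h⁻¹ j` for `j` in the range
of `h` and `T j = min { i : aᵢ = bⱼ }` otherwise. If `c ∈ Aᵐ` with `c <ₗₑₓ a`, then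
(1) `(a_{T j})ⱼ = b`, and (2) `(c_{T j})ⱼ <ₗₑₓ b`. -/
theorem witness_transfer_lex
    (t m n : ℕ) (a : Fin m → Fin t) (b : Fin n → Fin t)
    (h : Fin m → Fin n) (hw : WitnessesF a b h)
    (T : Fin n → Fin m)
    (hT₁ : ∀ i : Fin m, T (h i) = i)
    (hT₂ : ∀ j : Fin n, j ∉ Set.range h →
      a (T j) = b j ∧ ∀ i : Fin m, i < T j → a i ≠ b j)
    (c : Fin m → Fin t) (hc : LtLex c a) :
    (∀ j : Fin n, a (T j) = b j) ∧ LtLex (fun j => c (T j)) b := by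
  obtain ⟨hmono, hab, hrange, hfo⟩ := hw
  have part1 : ∀ j : Fin n, a (T j) = b j := by
    intro j
    by_cases hj : j ∈ Set.range h
    · obtain ⟨i, rfl⟩ := hj
      rw [hT₁]; exact hab i
    · exact (hT₂ j hj).1
  refine ⟨part1, ?_⟩
  obtain ⟨i₀, hltc, hi₀⟩ := hc
  refine ⟨h i₀, ?_, ?_⟩
  · intro j hj
    have hTj : T j < i₀ := by
      by_cases hjr : j ∈ Set.range h
      · obtain ⟨i, rfl⟩ := hjr
        rw [hT₁]
        exact hmono.lt_iff_lt.mp hj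
      · obtain ⟨heq, hmin⟩ := hT₂ j hjr
        have hfirst : ∀ i' : Fin m, i' < T j → a i' ≠ a (T j) := by
          intro i' hi'; rw [heq]; exact hmin i' hi'
        have hge : h (T j) ≤ j := by
          by_contra hlt'
          exact hfo (T j) hfirst j (lt_of_not_ge hlt') heq.symm
        have hne : h (T j) ≠ j := fun e => hjr ⟨T j, e⟩
        have hlt2 : h (T j) < h i₀ :=
          lt_of_le_of_lt (lt_of_le_of_ne hge hne).le hj
        exact hmono.lt_iff_lt.mp hlt2
    show c (T j) = b j
    rw [hltc (T j) hTj, part1 j]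
  · show c (T (h i₀)) < b (h i₀)
    rw [hT₁]
    exact lt_of_lt_of_eq hi₀ (hab i₀)
end

section
/- Let k, m ∈ ℕ with k ≥ 2, and let A be an algebra with a k-edge term. Let F and G be subuniverses of A^m with F ⊆ G. Assume that φ_i(G) = φ_i(F) for all i ∈ {1,…,m}, and that π_T(F) = π_T(G) for all T ⊆ {1,…,m} with |T| < k. Then F = G. -/
open FirstOrder FirstOrder.Language

/-- `F ⊆ Aᵐ` is a subuniverse of the power algebra `Aᵐ`: it is closed under all
operations of `A`, applied componentwise. -/
def IsSubuniverse (L : FirstOrder.Language) {A : Type} [L.Structure A] {m : ℕ}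
    (F : Set (Fin m → A)) : Prop :=
  ∀ (l : ℕ) (f : L.Functions l) (v : Fin l → (Fin m → A)),
    (∀ i, v i ∈ F) → (fun p => Structure.funMap f (fun i => v i p)) ∈ F

/-- The fork relation `φᵢ(F)` of `F ⊆ Aᵐ` at place `i`: all pairs `(xᵢ, yᵢ)` with
`x, y ∈ F` agreeing at all places before `i`. -/
def fork {A : Type} {m : ℕ} (F : Set (Fin m → A)) (i : Fin m) : Set (A × A) :=
  {p | ∃ x ∈ F, ∃ y ∈ F, (∀ j : Fin m, j < i → x j = y j) ∧ p = (x i, y i)}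

/-- The projection `π_T(F)` of `F ⊆ Aᵐ` onto the coordinates in `T`. -/
def projT {A : Type} {m : ℕ} (F : Set (Fin m → A)) (T : Finset (Fin m)) :
    Set ((j : T) → A) :=
  {g | ∃ x ∈ F, ∀ j : T, g j = x (j : Fin m)}

section EdgeHelpers

variable {A : Type} {k : ℕ}

/-- Auxiliary slot constructor: places `a, b, c` in the first three slots and
`e 0, e 1, …` in the remaining ones. -/
def eslots {m : ℕ} (a b c : Fin m → A) (e : ℕ → Fin m → A) :
    Fin (k + 1) → (Fin m → A) :=
  fun i => if (i : ℕ) = 0 then a else if (i : ℕ) = 1 then b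
    else if (i : ℕ) = 2 then c else e ((i : ℕ) - 3)

theorem edge_R1 {f : (Fin (k + 1) → A) → A} (hf : IsEdgeOp k f)
    {v : Fin (k + 1) → A} {xv yv : A}
    (h : ∀ i : Fin (k + 1), v i = if (i : ℕ) ≤ 1 then yv else xv) : f v = xv := by
  rw [show v = _ from funext h]; exact hf.1 xv yv

theorem edge_R2 {f : (Fin (k + 1) → A) → A} (hf : IsEdgeOp k f)
    {v : Fin (k + 1) → A} {xv yv : A}
    (h : ∀ i : Fin (k + 1), v i = if (i : ℕ) = 0 ∨ (i : ℕ) = 2 then yv else xv) :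
    f v = xv := by
  rw [show v = _ from funext h]; exact hf.2.1 xv yv

theorem edge_R3 {f : (Fin (k + 1) → A) → A} (hf : IsEdgeOp k f)
    {v : Fin (k + 1) → A} {xv yv : A} (posv : ℕ) (hpos : 3 ≤ posv)
    (hlt : posv < k + 1)
    (h : ∀ i : Fin (k + 1), v i = if (i : ℕ) = posv then yv else xv) : f v = xv := by
  have hv : v = Function.update (fun _ => xv) ⟨posv, hlt⟩ yv := by
    funext i
    rw [h i, Function.update_apply]
    by_cases hc : (i : ℕ) = posv
    · rw [if_pos hc, if_pos (Fin.ext_iff.mpr hc)]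
    · rw [if_neg hc, if_neg (fun hcon => hc (Fin.ext_iff.mp hcon))]
  rw [hv]; exact hf.2.2 ⟨posv, hlt⟩ hpos xv yv

theorem eslots_at0 {m : ℕ} (a b c : Fin m → A) (e : ℕ → Fin m → A)
    {i : Fin (k + 1)} (h : (i : ℕ) = 0) : eslots a b c e i = a := by
  simp [eslots, h]

theorem eslots_at1 {m : ℕ} (a b c : Fin m → A) (e : ℕ → Fin m → A)
    {i : Fin (k + 1)} (h : (i : ℕ) = 1) : eslots a b c e i = b := by
  simp [eslots, h]

theorem eslots_at2 {m : ℕ} (a b c : Fin m → A) (e : ℕ → Fin m → A)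
    {i : Fin (k + 1)} (h : (i : ℕ) = 2) : eslots a b c e i = c := by
  simp [eslots, h]

theorem eslots_hi {m : ℕ} (a b c : Fin m → A) (e : ℕ → Fin m → A)
    {i : Fin (k + 1)} (h : 3 ≤ (i : ℕ)) : eslots a b c e i = e ((i : ℕ) - 3) := by
  have h0 : ¬(i : ℕ) = 0 := by omega
  have h1 : ¬(i : ℕ) = 1 := by omega
  have h2 : ¬(i : ℕ) = 2 := by omega
  simp [eslots, h0, h1, h2]

theorem edge_idem {f : (Fin (k + 1) → A) → A} (hf : IsEdgeOp k f) (a : A) :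
    f (fun _ => a) = a :=
  edge_R1 hf (xv := a) (yv := a) (fun i => by rw [ite_self])

end EdgeHelpers

set_option maxHeartbeats 1000000 in
/-- **Lemma (forks determine subpowers in the presence of an edge term).**
Let `A` be an algebra with a `k`-edge term (`k ≥ 2`), and let `F ⊆ G` be
subuniverses of `Aᵐ` such that `φᵢ(G) = φᵢ(F)` for all `i` and
`π_T(F) = π_T(G)` for all `T ⊆ {1, …, m}` with `|T| < k`. Then `F = G`. -/
theorem subuniverse_eq_of_forks_and_small_projections
    (L : FirstOrder.Language) (k m : ℕ) (hk : 2 ≤ k)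
    (A : Type) [L.Structure A]
    (hET : ∃ t : L.Term (Fin (k + 1)),
      IsEdgeOp k (fun v : Fin (k + 1) → A => t.realize v))
    (F G : Set (Fin m → A))
    (hF : IsSubuniverse L F) (hG : IsSubuniverse L G) (hFG : F ⊆ G)
    (hfork : ∀ i : Fin m, fork G i = fork F i)
    (hproj : ∀ T : Finset (Fin m), T.card < k → projT F T = projT G T) :
    F = G := by
  obtain ⟨t, ht⟩ := hET
  -- closure of F under realization of terms, componentwise
  have term_closed : ∀ {l : ℕ} (τ : L.Term (Fin l)) (v : Fin l → (Fin m → A)),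
      (∀ i, v i ∈ F) → (fun p => τ.realize (fun i => v i p)) ∈ F := by
    intro l τ
    induction τ with
    | var i =>
        intro v hv
        simpa [Term.realize] using hv i
    | @func l' fsym ts ih =>
        intro v hv
        have heq : (fun p => Term.realize (fun i => v i p) (Term.func fsym ts))
            = fun p => Structure.funMap fsym
                (fun i => (fun p' => (ts i).realize (fun i' => v i' p')) p) := by
          funext p; simp [Term.realize]
        rw [heq]
        exact hF _ fsym _ (fun i => ih i v hv)
  have T_mem : ∀ w : Fin (k + 1) → (Fin m → A), (∀ i, w i ∈ F) →
      (fun p => t.realize (fun i => w i p)) ∈ F :=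
    fun w hw => term_closed t w hw
  -- main induction on prefixes
  have main : ∀ n : ℕ, ∀ g' ∈ G, ∃ x ∈ F, ∀ j : Fin m, (j : ℕ) < n → x j = g' j := by
    intro n
    induction n with
    | zero =>
        intro g' hg'
        have h0 : (∅ : Finset (Fin m)).card < k := by
          simp only [Finset.card_empty]; omega
        have hme : (fun j : (∅ : Finset (Fin m)) => g' (j : Fin m)) ∈ projT G ∅ :=
          ⟨g', hg', fun j => rfl⟩
        rw [← hproj ∅ h0] at hme
        obtain ⟨x, hxF, -⟩ := hme
        exact ⟨x, hxF, fun j hj => absurd hj (by omega)⟩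
    | succ n IH =>
        intro g' hg'
        rcases Nat.lt_or_ge n m with hnm | hnm
        case inr =>
          obtain ⟨x, hxF, hx⟩ := IH g' hg'
          exact ⟨x, hxF, fun j _ => hx j (by omega)⟩
        case inl =>
        obtain ⟨x, hxF, hx⟩ := IH g' hg'
        set nn : Fin m := ⟨n, hnm⟩ with hnn
        -- fork pair for (x nn, g' nn)
        have hfk : (x nn, g' nn) ∈ fork G nn :=
          ⟨x, hFG hxF, g', hg', fun j hj => hx j hj, rfl⟩
        rw [hfork nn] at hfk
        obtain ⟨p, hpF, q, hqF, hpq, hval⟩ := hfk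
        have hpn : p nn = x nn := (congrArg Prod.fst hval).symm
        have hqn : q nn = g' nn := (congrArg Prod.snd hval).symm
        -- the inner recursion on |C|
        have claim : ∀ (c : ℕ) (C : Finset (Fin m)), C.card = c →
            (∀ j ∈ C, (j : ℕ) < n) →
            ∃ z ∈ F, (∀ j ∈ C, z j = g' j) ∧ z nn = g' nn := by
          intro c
          induction c using Nat.strong_induction_on with
          | _ c IH2 =>
            intro C hcard hCn
            rcases Nat.lt_or_ge (c + 1) k with hsmall | hbig
            · -- base case via hproj
              have hT' : (insert nn C).card < k :=
                lt_of_le_of_lt (Finset.card_insert_le _ _) (by omega)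
              have hme : (fun j : (insert nn C : Finset (Fin m)) => g' (j : Fin m))
                  ∈ projT G (insert nn C) := ⟨g', hg', fun j => rfl⟩
              rw [← hproj _ hT'] at hme
              obtain ⟨z, hzF, hz⟩ := hme
              exact ⟨z, hzF, fun j hj => (hz ⟨j, Finset.mem_insert_of_mem hj⟩).symm,
                (hz ⟨nn, Finset.mem_insert_self _ _⟩).symm⟩
            · -- recursive step; here c ≥ k - 1 ≥ 1
              have hc1 : k - 2 ≤ C.card := by omega
              obtain ⟨Θ, hΘC, hΘcard⟩ := Finset.exists_subset_card_eq hc1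
              set ι := Θ.orderIsoOfFin hΘcard with hι
              set θ : ℕ → Fin m :=
                fun l => if h : l < k - 2 then (ι ⟨l, h⟩ : Fin m) else nn with hθ
              have hθmem : ∀ l, l < k - 2 → θ l ∈ Θ := by
                intro l hl
                simp only [hθ, dif_pos hl]
                exact (ι ⟨l, hl⟩).2
              have hθsur : ∀ j ∈ Θ, ∃ l, l < k - 2 ∧ θ l = j := by
                intro j hj
                obtain ⟨l, hl⟩ : ∃ l : Fin (k - 2), ι l = ⟨j, hj⟩ :=
                  ⟨ι.symm ⟨j, hj⟩, ι.apply_symm_apply _⟩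
                refine ⟨(l : ℕ), l.2, ?_⟩
                simp only [hθ, dif_pos l.2, Fin.eta, hl]
              have hθinj : ∀ l₁ l₂, l₁ < k - 2 → l₂ < k - 2 → θ l₁ = θ l₂ → l₁ = l₂ := by
                intro l₁ l₂ h₁ h₂ he
                simp only [hθ, dif_pos h₁, dif_pos h₂] at he
                have := ι.injective (Subtype.coe_injective he)
                simpa using this
              -- z₁ : agrees with g' on Θ and at nn
              have hΘn : ∀ j ∈ Θ, (j : ℕ) < n := fun j hj => hCn j (hΘC hj)
              obtain ⟨z₁, hz₁F, hz₁Θ, hz₁n⟩ :=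
                IH2 (k - 2) (by omega) Θ hΘcard hΘn
              -- E l : agrees with g' on C \ {θ l} and at nn
              have hEex : ∀ l : ℕ, ∃ e, e ∈ F ∧ (l < k - 2 →
                  ((∀ j ∈ C.erase (θ l), e j = g' j) ∧ e nn = g' nn)) := by
                intro l
                rcases Nat.lt_or_ge l (k - 2) with hl | hl
                · have hcard' : (C.erase (θ l)).card = c - 1 := by
                    rw [Finset.card_erase_of_mem (hΘC (hθmem l hl)), hcard]
                  obtain ⟨e, heF, h1, h2⟩ := IH2 (c - 1) (by omega) (C.erase (θ l)) hcard'
                    (fun j hj => hCn j (Finset.mem_of_mem_erase hj))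
                  exact ⟨e, heF, fun _ => ⟨h1, h2⟩⟩
                · exact ⟨x, hxF, fun h' => absurd h' (by omega)⟩
              choose E hEF hEprop using hEex
              have hEC : ∀ l, l < k - 2 → ∀ j ∈ C, j ≠ θ l → E l j = g' j :=
                fun l hl j hj hne => (hEprop l hl).1 j (Finset.mem_erase.mpr ⟨hne, hj⟩)
              have hEn : ∀ l, l < k - 2 → E l nn = g' nn :=
                fun l hl => (hEprop l hl).2
              have slots_mem : ∀ (a b c' : Fin m → A) (e : ℕ → Fin m → A),
                  a ∈ F → b ∈ F → c' ∈ F → (∀ l, e l ∈ F) →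
                  ∀ i : Fin (k + 1), eslots a b c' e i ∈ F := by
                intro a b c' e ha hb hc' he i
                simp only [eslots]
                split_ifs <;> first | exact ha | exact hb | exact hc' | apply he
              have hcase : ∀ i : Fin (k + 1), (i : ℕ) = 0 ∨ (i : ℕ) = 1 ∨ (i : ℕ) = 2 ∨
                  (3 ≤ (i : ℕ) ∧ (i : ℕ) - 3 < k - 2) := by
                intro i
                have := i.isLt
                omega
              -- the combined tuples
              obtain ⟨S₁, hS₁d⟩ :
                  ∃ S, S = fun pp => t.realize (fun i => eslots p x p (fun _ => z₁) i pp) :=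
                ⟨_, rfl⟩
              obtain ⟨S₃, hS₃d⟩ :
                  ∃ S, S = fun pp => t.realize (fun i => eslots p x q (fun _ => z₁) i pp) :=
                ⟨_, rfl⟩
              obtain ⟨S₂, hS₂d⟩ :
                  ∃ S, S = fun pp => t.realize (fun i => eslots x x x E i pp) :=
                ⟨_, rfl⟩
              have hS₁j : ∀ j, S₁ j = t.realize (fun i => eslots p x p (fun _ => z₁) i j) :=
                fun j => by rw [hS₁d]
              have hS₃j : ∀ j, S₃ j = t.realize (fun i => eslots p x q (fun _ => z₁) i j) :=
                fun j => by rw [hS₃d]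
              have hS₂j : ∀ j, S₂ j = t.realize (fun i => eslots x x x E i j) :=
                fun j => by rw [hS₂d]
              have hS₁F : S₁ ∈ F := by
                rw [hS₁d]; exact T_mem _ (slots_mem _ _ _ _ hpF hxF hpF (fun _ => hz₁F))
              have hS₃F : S₃ ∈ F := by
                rw [hS₃d]; exact T_mem _ (slots_mem _ _ _ _ hpF hxF hqF (fun _ => hz₁F))
              have hS₂F : S₂ ∈ F := by
                rw [hS₂d]; exact T_mem _ (slots_mem _ _ _ _ hxF hxF hxF hEF)
              have hZF : (fun pp => t.realize (fun i => eslots S₁ S₂ S₃ E i pp)) ∈ F :=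
                T_mem _ (slots_mem _ _ _ _ hS₁F hS₂F hS₃F hEF)
              -- coordinate computations
              have hltnn : ∀ j : Fin m, (j : ℕ) < n → j < nn := by
                intro j hj; rw [hnn, Fin.lt_def]; exact hj
              -- (A) S₁ and S₃ agree strictly below n
              have hA : ∀ j : Fin m, (j : ℕ) < n → S₁ j = S₃ j := by
                intro j hj
                rw [hS₁j j, hS₃j j]
                congr 1
                funext i
                rcases hcase i with h | h | h | ⟨h3, hlt⟩
                · rw [eslots_at0 _ _ _ _ h, eslots_at0 _ _ _ _ h]
                · rw [eslots_at1 _ _ _ _ h, eslots_at1 _ _ _ _ h]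
                · rw [eslots_at2 _ _ _ _ h, eslots_at2 _ _ _ _ h]
                  exact hpq j (hltnn j hj)
                · rw [eslots_hi _ _ _ _ h3, eslots_hi _ _ _ _ h3]
              -- (B) S₁ and S₃ agree with g' on Θ
              have hB : ∀ j ∈ Θ, S₁ j = g' j ∧ S₃ j = g' j := by
                intro j hj
                have hjn : (j : ℕ) < n := hΘn j hj
                have hxj : x j = g' j := hx j hjn
                have hz₁j : z₁ j = g' j := hz₁Θ j hj
                have hqj : q j = p j := (hpq j (hltnn j hjn)).symm
                constructor
                · rw [hS₁j j]
                  refine edge_R2 ht (xv := g' j) (yv := p j) ?_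
                  intro i
                  rcases hcase i with h | h | h | ⟨h3, hlt⟩
                  · rw [eslots_at0 _ _ _ _ h, if_pos (Or.inl h)]
                  · rw [eslots_at1 _ _ _ _ h, if_neg (by omega)]; exact hxj
                  · rw [eslots_at2 _ _ _ _ h, if_pos (Or.inr h)]
                  · rw [eslots_hi _ _ _ _ h3, if_neg (by omega)]; exact hz₁j
                · rw [hS₃j j]
                  refine edge_R2 ht (xv := g' j) (yv := p j) ?_
                  intro i
                  rcases hcase i with h | h | h | ⟨h3, hlt⟩
                  · rw [eslots_at0 _ _ _ _ h, if_pos (Or.inl h)]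
                  · rw [eslots_at1 _ _ _ _ h, if_neg (by omega)]; exact hxj
                  · rw [eslots_at2 _ _ _ _ h, if_pos (Or.inr h)]; exact hqj
                  · rw [eslots_hi _ _ _ _ h3, if_neg (by omega)]; exact hz₁j
              -- (C) S₂ agrees with g' on C
              have hC : ∀ j ∈ C, S₂ j = g' j := by
                intro j hj
                have hjn : (j : ℕ) < n := hCn j hj
                have hxj : x j = g' j := hx j hjn
                by_cases hjΘ : j ∈ Θ
                · obtain ⟨l₀, hl₀, hθl₀⟩ := hθsur j hjΘ
                  have hpos : (3 + l₀ : ℕ) < k + 1 := by omega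
                  rw [hS₂j j]
                  refine edge_R3 ht (xv := g' j) (yv := E l₀ j) (3 + l₀)
                    (Nat.le_add_right 3 l₀) hpos ?_
                  intro i
                  rcases hcase i with h | h | h | ⟨h3, hlt⟩
                  · rw [eslots_at0 _ _ _ _ h, if_neg (by omega)]; exact hxj
                  · rw [eslots_at1 _ _ _ _ h, if_neg (by omega)]; exact hxj
                  · rw [eslots_at2 _ _ _ _ h, if_neg (by omega)]; exact hxj
                  · rw [eslots_hi _ _ _ _ h3]
                    by_cases hil : (i : ℕ) - 3 = l₀
                    · rw [if_pos (by omega), hil]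
                    · rw [if_neg (by omega)]
                      refine hEC _ hlt j hj (fun hcon => hil ?_)
                      exact hθinj _ _ hlt hl₀ (by rw [← hcon, ← hθl₀])
                · rw [hS₂j j]
                  have he : (fun i : Fin (k + 1) => eslots x x x E i j)
                      = (fun _ : Fin (k + 1) => g' j) := by
                    funext i
                    rcases hcase i with h | h | h | ⟨h3, hlt⟩
                    · rw [eslots_at0 _ _ _ _ h]; exact hxj
                    · rw [eslots_at1 _ _ _ _ h]; exact hxj
                    · rw [eslots_at2 _ _ _ _ h]; exact hxj
                    · rw [eslots_hi _ _ _ _ h3]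
                      exact hEC _ hlt j hj
                        (fun hcon => hjΘ (hcon ▸ hθmem _ hlt))
                  rw [he]
                  exact edge_idem ht (g' j)
              -- (D) S₁ nn = S₂ nn
              have hD : S₁ nn = S₂ nn := by
                rw [hS₁j nn, hS₂j nn]
                congr 1
                funext i
                rcases hcase i with h | h | h | ⟨h3, hlt⟩
                · rw [eslots_at0 _ _ _ _ h, eslots_at0 _ _ _ _ h]; exact hpn
                · rw [eslots_at1 _ _ _ _ h, eslots_at1 _ _ _ _ h]
                · rw [eslots_at2 _ _ _ _ h, eslots_at2 _ _ _ _ h]; exact hpn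
                · rw [eslots_hi _ _ _ _ h3, eslots_hi _ _ _ _ h3, hz₁n, hEn _ hlt]
              -- (E) S₃ nn = g' nn
              have hE' : S₃ nn = g' nn := by
                rw [hS₃j nn]
                refine edge_R1 ht (xv := g' nn) (yv := x nn) ?_
                intro i
                rcases hcase i with h | h | h | ⟨h3, hlt⟩
                · rw [eslots_at0 _ _ _ _ h, if_pos (by omega)]; exact hpn
                · rw [eslots_at1 _ _ _ _ h, if_pos (by omega)]
                · rw [eslots_at2 _ _ _ _ h, if_neg (by omega)]; exact hqn
                · rw [eslots_hi _ _ _ _ h3, if_neg (by omega)]; exact hz₁n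
              -- Final: Z agrees with g' on C and at nn
              refine ⟨_, hZF, ?_, ?_⟩
              · intro j hj
                have hjn : (j : ℕ) < n := hCn j hj
                by_cases hjΘ : j ∈ Θ
                · obtain ⟨l₀, hl₀, hθl₀⟩ := hθsur j hjΘ
                  have hpos : (3 + l₀ : ℕ) < k + 1 := by omega
                  show t.realize (fun i => eslots S₁ S₂ S₃ E i j) = g' j
                  refine edge_R3 ht (xv := g' j) (yv := E l₀ j) (3 + l₀)
                    (Nat.le_add_right 3 l₀) hpos ?_
                  intro i
                  rcases hcase i with h | h | h | ⟨h3, hlt⟩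
                  · rw [eslots_at0 _ _ _ _ h, if_neg (by omega)]; exact (hB j hjΘ).1
                  · rw [eslots_at1 _ _ _ _ h, if_neg (by omega)]; exact hC j hj
                  · rw [eslots_at2 _ _ _ _ h, if_neg (by omega)]; exact (hB j hjΘ).2
                  · rw [eslots_hi _ _ _ _ h3]
                    by_cases hil : (i : ℕ) - 3 = l₀
                    · rw [if_pos (by omega), hil]
                    · rw [if_neg (by omega)]
                      refine hEC _ hlt j hj (fun hcon => hil ?_)
                      exact hθinj _ _ hlt hl₀ (by rw [← hcon, ← hθl₀])
                · show t.realize (fun i => eslots S₁ S₂ S₃ E i j) = g' j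
                  refine edge_R2 ht (xv := g' j) (yv := S₁ j) ?_
                  intro i
                  rcases hcase i with h | h | h | ⟨h3, hlt⟩
                  · rw [eslots_at0 _ _ _ _ h, if_pos (Or.inl h)]
                  · rw [eslots_at1 _ _ _ _ h, if_neg (by omega)]; exact hC j hj
                  · rw [eslots_at2 _ _ _ _ h, if_pos (Or.inr h)]; exact (hA j hjn).symm
                  · rw [eslots_hi _ _ _ _ h3, if_neg (by omega)]
                    exact hEC _ hlt j hj
                      (fun hcon => hjΘ (hcon ▸ hθmem _ hlt))
              · show t.realize (fun i => eslots S₁ S₂ S₃ E i nn) = g' nn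
                refine edge_R1 ht (xv := g' nn) (yv := S₁ nn) ?_
                intro i
                rcases hcase i with h | h | h | ⟨h3, hlt⟩
                · rw [eslots_at0 _ _ _ _ h, if_pos (by omega)]
                · rw [eslots_at1 _ _ _ _ h, if_pos (by omega)]; exact hD.symm
                · rw [eslots_at2 _ _ _ _ h, if_neg (by omega)]; exact hE'
                · rw [eslots_hi _ _ _ _ h3, if_neg (by omega)]; exact hEn _ hlt
        -- apply claim to the full prefix
        obtain ⟨z, hzF, hzC, hznn⟩ :=
          claim _ (Finset.filter (fun j => (j : ℕ) < n) Finset.univ) rfl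
            (by intro j hj; simpa using (Finset.mem_filter.mp hj).2)
        refine ⟨z, hzF, fun j hj => ?_⟩
        rcases Nat.lt_or_ge (j : ℕ) n with h | h
        · exact hzC j (by simp [h])
        · have hj' : (j : ℕ) = n := by omega
          have hjnn : j = nn := Fin.ext hj'
          rw [hjnn]; exact hznn
  -- conclude F = G
  refine Set.Subset.antisymm hFG fun g' hg' => ?_
  obtain ⟨x, hxF, hx⟩ := main m g' hg'
  have hxg : x = g' := funext fun j => hx j j.2
  rwa [← hxg]
end

section
/- Let A be an algebra and let W_1, W_2 be subvarieties of Var(A). Then W_1 ⊆ W_2 if and only if Th_A(W_2) ⊆ Th_A(W_1), where Th_A(W) := { (a_1,…,a_k) ↦ (s^A(a), t^A(a)) : k ∈ ℕ, s, t are k-variable terms in the language of A with W ⊨ s ≈ t } is the clonoid with source set A and target algebra A × A associated to W. -/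
open FirstOrder FirstOrder.Language

universe u v

/-- The clonoid `Th_A(W)` associated with a subvariety `W` of `Var(A)`: for each
arity `k`, the set of functions `Aᵏ → A × A` of the form `a ↦ (sᴬ(a), tᴬ(a))`
where `s, t` are `k`-variable terms with `W ⊨ s ≈ t`. -/
def ThA {L : FirstOrder.Language} (A : Alg L) (W : Set (Alg L)) (k : ℕ) :
    Set ((Fin k → A.carrier) → A.carrier × A.carrier) :=
  {F | ∃ s t : L.Term (Fin k),
        (∀ B ∈ W, B.Sat ⟨k, (s, t)⟩) ∧
        F = fun v => (s.realize v, t.realize v)}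

/-- **Lemma (Galois correspondence between subvarieties and clonoids).**
For subvarieties `W₁, W₂` of `Var(A)` we have
`W₁ ⊆ W₂` if and only if `Th_A(W₂) ⊆ Th_A(W₁)`. -/
theorem subvariety_subset_iff_thA_superset
    (L : FirstOrder.Language) [L.IsAlgebraic] (A : Alg L)
    (W₁ W₂ : Set (Alg L)) (h₁ : IsVariety L W₁) (h₂ : IsVariety L W₂)
    (hs₁ : W₁ ⊆ varGen L {A}) (hs₂ : W₂ ⊆ varGen L {A}) :
    W₁ ⊆ W₂ ↔ ∀ k : ℕ, ThA A W₂ k ⊆ ThA A W₁ k := by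
  constructor
  · intro hsub k F hF
    obtain ⟨s, t, hst, hFeq⟩ := hF
    exact ⟨s, t, fun B hB => hst B (hsub hB), hFeq⟩
  · intro h B hB
    obtain ⟨E₂, hE₂⟩ := h₂
    rw [hE₂]
    intro e he
    obtain ⟨n, s, t⟩ := e
    have hF : (fun v => (s.realize v, t.realize v)) ∈ ThA A W₂ n := by
      refine ⟨s, t, fun C hC => ?_, rfl⟩
      rw [hE₂] at hC
      exact hC _ he
    obtain ⟨s', t', hW₁, hEq⟩ := h n hF
    have hs : ∀ v : Fin n → A.carrier, s.realize v = s'.realize v := by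
      intro v
      have := congrFun hEq v
      exact (Prod.mk.injEq _ _ _ _).mp this |>.1
    have ht : ∀ v : Fin n → A.carrier, t.realize v = t'.realize v := by
      intro v
      have := congrFun hEq v
      exact (Prod.mk.injEq _ _ _ _).mp this |>.2
    have hBvar : B ∈ varGen L {A} := hs₁ hB
    have hBs : B.Sat ⟨n, (s, s')⟩ := by
      apply hBvar
      intro C hC
      rw [Set.mem_singleton_iff] at hC
      subst hC
      exact hs
    have hBt : B.Sat ⟨n, (t, t')⟩ := by
      apply hBvar
      intro C hC
      rw [Set.mem_singleton_iff] at hC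
      subst hC
      exact ht
    intro v
    calc s.realize v = s'.realize v := hBs v
      _ = t'.realize v := hW₁ B hB v
      _ = t.realize v := (hBt v).symm
end

section
/- Let A be a finite algebra. Then there are only finitely many varieties W with W ≺ Var(A); in fact, the number of such subcovers is at most |Clo_k(A)|², where k is the number of generators of A and Clo_k(A) is the set of k-ary term functions of A. -/
open FirstOrder FirstOrder.Language

universe u v

/- ----------------- auxiliary material ----------------- -/

lemma mem_varGen_self {L : FirstOrder.Language} (A : Alg L) : A ∈ varGen L {A} :=
  fun _ he => he A rfl

lemma modClass_inter {L : FirstOrder.Language} (E₁ E₂ : Set (Identity L)) :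
    ModClass L E₁ ∩ ModClass L E₂ = ModClass L (E₁ ∪ E₂) := by
  ext B
  constructor
  · rintro ⟨h1, h2⟩ e he
    rcases he with he | he
    · exact h1 e he
    · exact h2 e he
  · intro h
    exact ⟨fun e he => h e (Or.inl he), fun e he => h e (Or.inr he)⟩

/-- A finite set of size at most `k` in a nonempty type is covered by the range of a
function from `Fin k`. -/
lemma exists_range_superset {α : Type} [Nonempty α] {S : Set α} (hS : S.Finite) {k : ℕ}
    (h : S.ncard ≤ k) : ∃ g : Fin k → α, S ⊆ Set.range g := by
  haveI := hS.fintype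
  have hcard : Fintype.card S = S.ncard := by
    rw [← Nat.card_coe_set_eq, Nat.card_eq_fintype_card]
  set e := Fintype.equivFin S with he
  refine ⟨fun i => if hi : (i : ℕ) < Fintype.card S then (e.symm ⟨i, hi⟩ : α)
    else Classical.arbitrary α, ?_⟩
  intro x hx
  have hj : ((e ⟨x, hx⟩ : Fin (Fintype.card S)) : ℕ) < Fintype.card S := (e ⟨x, hx⟩).2
  refine ⟨⟨(e ⟨x, hx⟩ : Fin (Fintype.card S)), lt_of_lt_of_le hj (hcard ▸ h)⟩, ?_⟩
  simp only [hj, dif_pos]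
  have : (⟨((e ⟨x, hx⟩ : Fin (Fintype.card S)) : ℕ), hj⟩ : Fin (Fintype.card S))
      = e ⟨x, hx⟩ := Fin.eta _ _
  rw [this, Equiv.symm_apply_apply]

/-- Every element of a `k`-generated algebra is the value of a `k`-ary term at a
fixed tuple `g`. -/
lemma exists_term_of_kgen {L : FirstOrder.Language} (A : Alg L) {k : ℕ}
    (hgen : KGen L k A) (hne : Nonempty A.carrier) :
    ∃ g : Fin k → A.carrier, ∀ a : A.carrier, ∃ t : L.Term (Fin k), t.realize g = a := by
  obtain ⟨S, hSfin, hScard, hScl⟩ := hgen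
  obtain ⟨g, hSg⟩ := exists_range_superset hSfin hScard
  refine ⟨g, fun a => ?_⟩
  have ha : a ∈ Substructure.closure L (Set.range g) :=
    Substructure.closure_mono hSg (hScl ▸ Substructure.mem_top a : a ∈ Substructure.closure L S)
  obtain ⟨t, ht⟩ := Substructure.mem_closure_iff_exists_term.mp ha
  classical
  choose σ hσ using fun x : ↥(Set.range g) => x.2
  refine ⟨t.relabel σ, ?_⟩
  rw [Term.realize_relabel]
  convert ht using 2
  funext x
  exact hσ x

/-- Key extraction lemma: every subcover of `Var(A)` is cut out of `Var(A)` by a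
single identity in `k` variables that fails in `A`. -/
lemma subcover_eq_inter {L : FirstOrder.Language} (A : Alg L) {k : ℕ}
    (hgen : KGen L k A) (W : Set (Alg L)) (hW : IsVariety L W)
    (hsub : IsSubcover L W (varGen L {A})) :
    ∃ s t : L.Term (Fin k), ¬ A.Sat ⟨k, (s, t)⟩ ∧
      W = varGen L {A} ∩ ModClass L {⟨k, (s, t)⟩} := by
  obtain ⟨E, rfl⟩ := hW
  -- A is not in W
  have hAW : A ∉ ModClass L E := by
    intro hA
    have hVW : varGen L {A} ⊆ ModClass L E := by
      intro B hB e he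
      exact hB e (fun C hC => by rw [Set.mem_singleton_iff] at hC; rw [hC]; exact hA e he)
    exact hsub.1.2 hVW
  -- extract a failing identity in E
  have he' : ∃ e ∈ E, ¬ A.Sat e := by
    by_contra h
    push_neg at h
    exact hAW (fun e he => h e he)
  obtain ⟨e, heE, heA⟩ := he'
  rw [Alg.Sat] at heA
  push_neg at heA
  obtain ⟨v, hv⟩ := heA
  have hne : Nonempty A.carrier := ⟨e.2.1.realize v⟩
  obtain ⟨g, hrep⟩ := exists_term_of_kgen A hgen hne
  choose u hu using fun i => hrep (v i)
  refine ⟨e.2.1.subst u, e.2.2.subst u, ?_, ?_⟩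
  · -- fails in A
    intro hsat
    have := hsat g
    rw [Term.realize_subst, Term.realize_subst] at this
    have hvu : (fun i => (u i).realize g) = v := funext fun i => hu i
    rw [hvu] at this
    exact hv this
  · -- W equals the cut
    have hWsat : ∀ B ∈ ModClass L E, B.Sat ⟨k, (e.2.1.subst u, e.2.2.subst u)⟩ := by
      intro B hB w
      have hBe := hB e heE
      simp only [Term.realize_subst]
      exact hBe _
    have hWsub : ModClass L E ⊆ varGen L {A} ∩ ModClass L {⟨k, (e.2.1.subst u, e.2.2.subst u)⟩} := by
      intro B hB
      exact ⟨hsub.1.1 hB, fun e' he' => by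
        rw [Set.mem_singleton_iff] at he'; rw [he']; exact hWsat B hB⟩
    have hAnot : A ∉ varGen L {A} ∩ ModClass L {⟨k, (e.2.1.subst u, e.2.2.subst u)⟩} := by
      rintro ⟨-, hA2⟩
      have hA3 := hA2 _ rfl
      have := hA3 g
      rw [Term.realize_subst, Term.realize_subst] at this
      have hvu : (fun i => (u i).realize g) = v := funext fun i => hu i
      rw [hvu] at this
      exact hv this
    by_contra hne'
    have hWss : ModClass L E ⊂
        varGen L {A} ∩ ModClass L {⟨k, (e.2.1.subst u, e.2.2.subst u)⟩} :=
      ⟨hWsub, fun h => hne' (le_antisymm hWsub h)⟩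
    have hssV : varGen L {A} ∩ ModClass L {⟨k, (e.2.1.subst u, e.2.2.subst u)⟩} ⊂
        varGen L {A} :=
      ⟨Set.inter_subset_left, fun h => hAnot (h (mem_varGen_self A))⟩
    refine hsub.2 ⟨varGen L {A} ∩ ModClass L {⟨k, (e.2.1.subst u, e.2.2.subst u)⟩},
      ⟨{e' | ∀ B ∈ ({A} : Set (Alg L)), B.Sat e'} ∪ {⟨k, (e.2.1.subst u, e.2.2.subst u)⟩},
        ?_⟩, hWss, hssV⟩
    rw [← modClass_inter]
    rfl

/-- **Lemma (finitely many subcovers, part 1).** Let `A` be a finite algebra generated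
by `k` elements. Then there are only finitely many varieties `W` with
`W ≺ Var(A)`; in fact the number of such subcovers is at most `|Clo_k(A)|²`,
where `Clo_k(A)` is the set of `k`-ary term functions of `A`. -/
theorem finitely_many_subcovers
    (L : FirstOrder.Language) [L.IsAlgebraic] (A : Alg L) [Finite A.carrier]
    (k : ℕ) (hgen : KGen L k A) :
    {W : Set (Alg L) | IsVariety L W ∧ IsSubcover L W (varGen L {A})}.Finite ∧
    Nat.card {W : Set (Alg L) // IsVariety L W ∧ IsSubcover L W (varGen L {A})} ≤
      (Nat.card {f : (Fin k → A.carrier) → A.carrier //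
          ∃ s : L.Term (Fin k), f = fun v => s.realize v}) ^ 2 := by
  classical
  set Clo := {f : (Fin k → A.carrier) → A.carrier //
      ∃ s : L.Term (Fin k), f = fun v => s.realize v} with hClo
  -- choose the defining identity for each subcover
  have hchoice : ∀ W : {W : Set (Alg L) // IsVariety L W ∧ IsSubcover L W (varGen L {A})},
      ∃ st : L.Term (Fin k) × L.Term (Fin k),
        W.1 = varGen L {A} ∩ ModClass L {⟨k, (st.1, st.2)⟩} := by
    rintro ⟨W, hWvar, hWsub⟩
    obtain ⟨s, t, -, hEq⟩ := subcover_eq_inter A hgen W hWvar hWsub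
    exact ⟨(s, t), hEq⟩
  choose st hst using hchoice
  -- the map into Clo × Clo
  set Φ : {W : Set (Alg L) // IsVariety L W ∧ IsSubcover L W (varGen L {A})} → Clo × Clo :=
    fun W => (⟨fun v => (st W).1.realize v, ⟨(st W).1, rfl⟩⟩,
              ⟨fun v => (st W).2.realize v, ⟨(st W).2, rfl⟩⟩) with hΦ
  have hinj : Function.Injective Φ := by
    intro W₁ W₂ h
    rw [hΦ] at h
    simp only [Prod.mk.injEq, Subtype.mk.injEq] at h
    obtain ⟨h1, h2⟩ := h
    -- within Var(A), the two identities define the same class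
    have key : varGen L {A} ∩ ModClass L {⟨k, ((st W₁).1, (st W₁).2)⟩} =
        varGen L {A} ∩ ModClass L {⟨k, ((st W₂).1, (st W₂).2)⟩} := by
      ext B
      simp only [Set.mem_inter_iff, and_congr_right_iff]
      intro hB
      have hBs : ∀ v : Fin k → B.carrier, (st W₁).1.realize v = (st W₂).1.realize v := by
        have : B.Sat ⟨k, ((st W₁).1, (st W₂).1)⟩ := by
          apply hB
          intro C hC
          rw [Set.mem_singleton_iff] at hC
          subst hC
          intro v
          exact congrFun (congrArg Subtype.val h1) v
        exact this
      have hBt : ∀ v : Fin k → B.carrier, (st W₁).2.realize v = (st W₂).2.realize v := by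
        have : B.Sat ⟨k, ((st W₁).2, (st W₂).2)⟩ := by
          apply hB
          intro C hC
          rw [Set.mem_singleton_iff] at hC
          subst hC
          intro v
          exact congrFun (congrArg Subtype.val h2) v
        exact this
      constructor
      · intro hmod e' he'
        rw [Set.mem_singleton_iff] at he'
        subst he'
        intro v
        have := hmod _ rfl v
        rw [← hBs, ← hBt]
        exact this
      · intro hmod e' he'
        rw [Set.mem_singleton_iff] at he'
        subst he'
        intro v
        have := hmod _ rfl v
        rw [hBs, hBt]
        exact this
    have : W₁.1 = W₂.1 := by rw [hst W₁, hst W₂, key]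
    exact Subtype.ext this
  haveI hCloFin : Finite Clo := Subtype.finite
  haveI : Finite {W : Set (Alg L) // IsVariety L W ∧ IsSubcover L W (varGen L {A})} :=
    Finite.of_injective Φ hinj
  refine ⟨Set.finite_coe_iff.mp ‹_›, ?_⟩
  calc Nat.card {W : Set (Alg L) // IsVariety L W ∧ IsSubcover L W (varGen L {A})}
      ≤ Nat.card (Clo × Clo) := Nat.card_le_card_of_injective Φ hinj
    _ = Nat.card Clo ^ 2 := by rw [Nat.card_prod, sq]
end
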